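/- arXiv:2106.12141 — 3 statements merged into one kernel-verified Lean document; each statement's English description precedes it below -/
import Mathlib

section
/- Vertex-weighted matrix tree theorem: Let D be a finite digraph with positive vertex weights χ(v). Define the vertex-weighted Laplacian Δ^{vertex} = (d_{uv}) by d_{uu} = Σ_{e: t(e)=u} χ(h(e)), d_{uv} = −χ(v) if (u,v) is an arc, and 0 otherwise. Then for any vertex v, Σ_{T∈𝒯(D,v)} Π_{e∈A(T)} χ(h(e)) = det((Δ^{vertex})_{vv}), where (Δ^{vertex})_{vv} is Δ^{vertex} with row and column v deleted. -/
open scoped Classical BigOperators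

section Digraph

variable {V : Type*} [Fintype V] [DecidableEq V]

/-- `T` is a spanning in-tree (arborescence toward the root) of the digraph
with arc set containing `T`, rooted at `r`: every vertex other than `r` has
exactly one outgoing arc in `T`, the root has none, and `T` has no directed cycle. -/
def IsSpTree (T : Finset (V × V)) (r : V) : Prop :=
  (∀ v : V, v ≠ r → ∃! a : V × V, a ∈ T ∧ a.1 = v) ∧
  (∀ a ∈ T, a.1 ≠ r) ∧
  (∀ (v : V) (l : List V), ¬ List.Chain (fun a b => (a, b) ∈ T) v (l ++ [v]))

/-- The set of spanning trees of the digraph with arc set `arcs`, rooted at `r`. -/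
noncomputable def trees (arcs : Finset (V × V)) (r : V) : Finset (Finset (V × V)) :=
  arcs.powerset.filter (fun T => IsSpTree T r)

/-- Edge-weighted complexity with root `r`: `κ^{edge}(D, r, χ)`. -/
noncomputable def kappaEdgeRooted (arcs : Finset (V × V)) (χ : V × V → ℝ) (r : V) : ℝ :=
  ∑ T ∈ trees arcs r, ∏ a ∈ T, χ a

/-- Total edge-weighted complexity `κ^{edge}(D, χ)` (over all roots). -/
noncomputable def kappaEdge (arcs : Finset (V × V)) (χ : V × V → ℝ) : ℝ :=
  ∑ r : V, kappaEdgeRooted arcs χ r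

/-- Vertex-weighted complexity with root `r`: `κ^{vertex}(D, r, χ)`. -/
noncomputable def kappaVertexRooted (arcs : Finset (V × V)) (χv : V → ℝ) (r : V) : ℝ :=
  ∑ T ∈ trees arcs r, ∏ a ∈ T, χv a.2

/-- Total vertex-weighted complexity `κ^{vertex}(D, χ)` (over all roots). -/
noncomputable def kappaVertex (arcs : Finset (V × V)) (χv : V → ℝ) : ℝ :=
  ∑ r : V, kappaVertexRooted arcs χv r

/-- Weighted adjacency matrix `W`: `W_{ij} = χ_{ij}` if `(i,j)` is an arc, else `0`. -/
def adjW (arcs : Finset (V × V)) (χ : V × V → ℝ) : Matrix V V ℝ :=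
  fun i j => if (i, j) ∈ arcs then χ (i, j) else 0

/-- Edge-weighted Laplacian `Δ^{edge}`. -/
def lapEdge (arcs : Finset (V × V)) (χ : V × V → ℝ) : Matrix V V ℝ :=
  fun i j => if i = j then ∑ k ∈ Finset.univ.erase i, adjW arcs χ i k
             else - adjW arcs χ i j

/-- Vertex-weighted Laplacian `Δ^{vertex}`. -/
noncomputable def lapVertex (arcs : Finset (V × V)) (χv : V → ℝ) : Matrix V V ℝ :=
  fun u v => if u = v then ∑ a ∈ arcs.filter (fun a => a.1 = u), χv a.2
             else if (u, v) ∈ arcs then - χv v else 0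

/-- Matrix obtained by deleting the row and column indexed by `v`. -/
def minorAt (A : Matrix V V ℝ) (v : V) : Matrix {u : V // u ≠ v} {u : V // u ≠ v} ℝ :=
  A.submatrix (fun u => (u : V)) (fun u => (u : V))

/-- Out-degree of `v`. -/
def outdeg (arcs : Finset (V × V)) (v : V) : ℕ := (arcs.filter (fun a => a.1 = v)).card

/-- In-degree of `v`. -/
def indeg (arcs : Finset (V × V)) (v : V) : ℕ := (arcs.filter (fun a => a.2 = v)).card

/-- Weighted out-degree `d_v = Σ_{t(e) = v} χ_e`. -/
noncomputable def wOut (arcs : Finset (V × V)) (χ : V × V → ℝ) (v : V) : ℝ :=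
  ∑ a ∈ arcs.filter (fun a => a.1 = v), χ a

end Digraph



namespace VMTT

variable {V : Type*} [Fintype V] [DecidableEq V]

set_option linter.unusedSectionVars false

/-- Extension of `f` to all of `V`, fixing `v`. -/
noncomputable def fe (v : V) (f : {u : V // u ≠ v} → V) : V → V :=
  fun x => if h : x = v then v else f ⟨x, h⟩

lemma fe_apply (v : V) (f : {u : V // u ≠ v} → V) (u : {u : V // u ≠ v}) :
    fe v f ↑u = f u := by
  simp [fe, u.2]

lemma fe_iterate_root (v : V) (f : {u : V // u ≠ v} → V) (k : ℕ) :
    (fe v f)^[k] v = v :=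
  Function.iterate_fixed (by simp [fe]) k

/-- `f` has a directed cycle avoiding `v`. -/
def HasCyc (v : V) (f : {u : V // u ≠ v} → V) : Prop :=
  ∃ u : V, u ≠ v ∧ ∃ k, 0 < k ∧ (fe v f)^[k] u = u

lemma iter_ne_root {v : V} {f : {u : V // u ≠ v} → V} {u : V} {k n : ℕ}
    (hu : u ≠ v) (hk : (fe v f)^[k] u = u) (hn : n ≤ k) : (fe v f)^[n] u ≠ v := by
  intro h
  apply hu
  have : (fe v f)^[k] u = v := by
    rw [show k = (k - n) + n from (Nat.sub_add_cancel hn).symm,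
      Function.iterate_add_apply, h, fe_iterate_root]
  rw [← hk, this]

/-- The sign pattern matrix attached to `f`. -/
noncomputable def Q (v : V) (f : {u : V // u ≠ v} → V) :
    Matrix {u : V // u ≠ v} {u : V // u ≠ v} ℝ :=
  fun i j => if i = j then 1 else if f i = ↑j then -1 else 0

lemma Q_apply_eq_sub (v : V) (f : {u : V // u ≠ v} → V) (hf : ∀ i, f i ≠ ↑i)
    (i j : {u : V // u ≠ v}) :
    Q v f i j = (if i = j then (1:ℝ) else 0) - (if f i = ↑j then (1:ℝ) else 0) := by
  unfold Q
  by_cases h : i = j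
  · subst h
    simp [hf i]
  · simp only [if_neg h]
    by_cases h2 : f i = ↑j <;> simp [h2]

lemma detQ_eq_zero {v : V} {f : {u : V // u ≠ v} → V} (hf : ∀ i, f i ≠ ↑i)
    (hc : HasCyc v f) : (Q v f).det = 0 := by
  obtain ⟨u, huv, k, hk, hcyc⟩ := hc
  set g := fe v f with hg
  set O : Finset V := (Finset.range k).image (fun n => g^[n] u) with hO
  have memO : ∀ x, x ∈ O ↔ ∃ n < k, g^[n] u = x := by
    intro x; simp [hO]
  have huO : u ∈ O := (memO u).2 ⟨0, hk, rfl⟩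
  have hne : ∀ x ∈ O, x ≠ v := by
    intro x hx
    obtain ⟨n, hn, rfl⟩ := (memO x).1 hx
    exact iter_ne_root huv hcyc hn.le
  have hmaps : ∀ x ∈ O, g x ∈ O := by
    intro x hx
    obtain ⟨n, hn, rfl⟩ := (memO x).1 hx
    rcases Nat.lt_or_ge (n+1) k with h | h
    · exact (memO _).2 ⟨n+1, h, (Function.iterate_succ_apply' g n u)⟩
    · have hnk : n + 1 = k := le_antisymm hn h
      refine (memO _).2 ⟨0, hk, ?_⟩
      rw [show g (g^[n] u) = g^[n+1] u from (Function.iterate_succ_apply' g n u).symm,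
        hnk, hcyc]
      rfl
  have hsurj : ∀ y ∈ O, ∃ x ∈ O, g x = y := by
    intro y hy
    obtain ⟨n, hn, rfl⟩ := (memO y).1 hy
    rcases Nat.eq_zero_or_pos n with rfl | hpos
    · refine ⟨g^[k-1] u, (memO _).2 ⟨k-1, Nat.sub_lt hk one_pos, rfl⟩, ?_⟩
      rw [show g (g^[k-1] u) = g^[k-1+1] u from (Function.iterate_succ_apply' g (k-1) u).symm,
        Nat.sub_add_cancel hk, hcyc]
      simp
    · refine ⟨g^[n-1] u, (memO _).2 ⟨n-1, lt_of_le_of_lt (Nat.sub_le _ _) hn, rfl⟩, ?_⟩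
      rw [show g (g^[n-1] u) = g^[n-1+1] u from (Function.iterate_succ_apply' g (n-1) u).symm,
        Nat.sub_add_cancel hpos]
  have hinj : ∀ x₁ ∈ O, ∀ x₂ ∈ O, g x₁ = g x₂ → x₁ = x₂ := by
    intro x₁ h₁ x₂ h₂ h
    exact Finset.inj_on_of_surj_on_of_card_le (fun a _ => g a)
      (fun a ha => hmaps a ha)
      (fun b hb => by obtain ⟨a, ha, h'⟩ := hsurj b hb; exact ⟨a, ha, h'⟩) le_rfl h₁ h₂ h
  -- the indicator vector of O is a nonzero left kernel vector
  set x : {u : V // u ≠ v} → ℝ := fun i => if ↑i ∈ O then 1 else 0 with hx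
  have hx0 : x ≠ 0 := by
    intro h0
    have := congrFun h0 ⟨u, huv⟩
    simp [hx, huO] at this
  have hker : Matrix.vecMul x (Q v f) = 0 := by
    funext j
    have hvm : Matrix.vecMul x (Q v f) j = ∑ i, x i * Q v f i j := by
      simp [Matrix.vecMul, dotProduct]
    rw [hvm]
    have hsplit : ∀ i, x i * Q v f i j =
        (if i = j ∧ ↑i ∈ O then (1:ℝ) else 0) - (if f i = ↑j ∧ ↑i ∈ O then (1:ℝ) else 0) := by
      intro i
      rw [Q_apply_eq_sub v f hf, hx]
      by_cases h1 : (i:V) ∈ O <;> simp [h1]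
    rw [Finset.sum_congr rfl fun i _ => hsplit i, Finset.sum_sub_distrib]
    have e1 : (∑ i : {u : V // u ≠ v}, if i = j ∧ ↑i ∈ O then (1:ℝ) else 0)
        = if (j:V) ∈ O then 1 else 0 := by
      rw [Finset.sum_eq_single j]
      · by_cases h : (j:V) ∈ O <;> simp [h]
      · intro b _ hb; simp [hb]
      · intro h; exact absurd (Finset.mem_univ j) h
    have e2 : (∑ i : {u : V // u ≠ v}, if f i = ↑j ∧ ↑i ∈ O then (1:ℝ) else 0)
        = if (j:V) ∈ O then 1 else 0 := by
      by_cases hj : (j:V) ∈ O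
      · obtain ⟨p, hpO, hpj⟩ := hsurj ↑j hj
        have hpv : p ≠ v := hne p hpO
        have hfp : f ⟨p, hpv⟩ = ↑j := by
          rw [← hpj, hg]; exact (fe_apply v f ⟨p, hpv⟩).symm
        rw [Finset.sum_eq_single ⟨p, hpv⟩]
        · simp [hj, hpO, hfp]
        · intro b _ hb
          by_cases hbc : f b = ↑j ∧ ↑b ∈ O
          · exfalso; apply hb
            apply Subtype.ext
            apply hinj _ hbc.2 _ hpO
            rw [hpj, ← hbc.1, hg]
            exact fe_apply v f b
          · simp [hbc]
        · intro h; exact absurd (Finset.mem_univ _) h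
      · rw [if_neg hj]
        apply Finset.sum_eq_zero
        intro i _
        by_cases hic : f i = ↑j ∧ ↑i ∈ O
        · exfalso
          apply hj
          have h2 := hmaps ↑i hic.2
          rw [hg, fe_apply, hic.1] at h2
          exact h2
        · simp [hic]
    rw [e1, e2, sub_self]
    rfl
  rw [← Matrix.exists_vecMul_eq_zero_iff]
  exact ⟨x, hx0, hker⟩


lemma perm_apply_inv_self {α : Type*} (σ : Equiv.Perm α) (x : α) : σ (σ⁻¹ x) = x := by
  simp

lemma detQ_eq_one {v : V} {f : {u : V // u ≠ v} → V} (hnc : ¬ HasCyc v f) :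
    (Q v f).det = 1 := by
  rw [Matrix.det_apply]
  refine (Finset.sum_eq_single (1 : Equiv.Perm {u : V // u ≠ v}) ?_ ?_).trans ?_
  · intro σ _ hσ
    have hprod : ∏ i, Q v f (σ i) i = 0 := by
      by_contra hp
      have hfac : ∀ i, Q v f (σ i) i ≠ 0 := fun i h =>
        hp (Finset.prod_eq_zero (Finset.mem_univ i) h)
      have hrule : ∀ i, σ i ≠ i → f (σ i) = ↑i := by
        intro i hi
        have h0 := hfac i
        unfold Q at h0
        rw [if_neg hi] at h0
        by_contra h
        rw [if_neg h] at h0; exact h0 rfl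
      have hfix : ∀ j : {u : V // u ≠ v}, σ j ≠ j → σ (σ⁻¹ j) ≠ σ⁻¹ j := by
        intro j hj
        rw [perm_apply_inv_self]
        intro h; apply hj
        rw [h, perm_apply_inv_self]
        exact h
      have hrule' : ∀ j : {u : V // u ≠ v}, σ j ≠ j → fe v f ↑j = ↑(σ⁻¹ j) := by
        intro j hj
        rw [fe_apply]
        have := hrule (σ⁻¹ j) (hfix j hj)
        rwa [perm_apply_inv_self] at this
      have hiter : ∀ (k : ℕ) (j : {u : V // u ≠ v}), σ j ≠ j →
          (fe v f)^[k] ↑j = ↑((σ⁻¹ ^ k) j) := by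
        intro k
        induction k with
        | zero => intro j _; simp
        | succ k ih =>
          intro j hj
          rw [Function.iterate_succ_apply, hrule' j hj, ih (σ⁻¹ j) (hfix j hj)]
          simp [pow_succ, Equiv.Perm.mul_apply]

      have hex : ∃ j : {u : V // u ≠ v}, σ j ≠ j := by
        by_contra h
        push_neg at h
        exact hσ (Equiv.ext fun x => by simpa using h x)
      obtain ⟨j, hj⟩ := hex
      apply hnc
      refine ⟨↑j, j.2, orderOf σ, orderOf_pos σ, ?_⟩
      rw [hiter (orderOf σ) j hj, inv_pow, pow_orderOf_eq_one]
      simp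
    rw [hprod]
    simp
  · intro h; exact absurd (Finset.mem_univ _) h
  · simp [Q]

lemma chain_iterates (R : V → V → Prop) (g : V → V) (k : ℕ) :
    ∀ (x : V), (∀ n < k, R (g^[n] x) (g^[n+1] x)) →
      List.Chain R x ((List.range k).map fun n => g^[n+1] x) := by
  induction k with
  | zero => intro x _; exact List.Chain.nil
  | succ k ih =>
    intro x h
    rw [List.range_succ_eq_map, List.map_cons, List.map_map]
    have hx : (List.range k).map ((fun n => g^[n+1] x) ∘ Nat.succ)
        = (List.range k).map (fun n => g^[n+1] (g x)) := by
      apply List.map_congr_left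
      intro n _
      exact Function.iterate_succ_apply g (n+1) x
    rw [hx]
    constructor
    · simpa using h 0 (Nat.succ_pos k)
    · apply ih (g x)
      intro n hn
      rw [← Function.iterate_succ_apply g n x, ← Function.iterate_succ_apply g (n+1) x]
      exact h (n+1) (by omega)

lemma chain_last (R : V → V → Prop) (g : V → V) (hR : ∀ a b, R a b → b = g a) :
    ∀ (l : List V) (x y : V), List.Chain R x (l ++ [y]) → y = g^[l.length + 1] x := by
  intro l
  induction l with
  | nil =>
    intro x y h
    rw [List.nil_append, List.Chain, List.chain_cons] at h
    simpa using hR x y h.1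
  | cons b t ih =>
    intro x y h
    rw [List.cons_append, List.Chain, List.chain_cons] at h
    have hb : b = g x := hR x b h.1
    have := ih b y h.2
    rw [this, hb, ← Function.iterate_succ_apply]
    simp [Nat.succ_eq_add_one]

end VMTT

namespace VMTT

variable {V : Type*} [Fintype V] [DecidableEq V]

set_option linter.unusedSectionVars false

open Matrix

noncomputable def heads (arcs : Finset (V × V)) (x : V) : Finset V :=
  (arcs.filter fun a => a.1 = x).image Prod.snd

lemma mem_heads {arcs : Finset (V × V)} {x w : V} :
    w ∈ heads arcs x ↔ (x, w) ∈ arcs := by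
  constructor
  · intro h
    obtain ⟨a, ha, rfl⟩ := Finset.mem_image.1 h
    obtain ⟨ha1, ha2⟩ := Finset.mem_filter.1 ha
    rwa [← ha2, Prod.mk.eta]
  · intro h
    exact Finset.mem_image.2 ⟨(x, w), Finset.mem_filter.2 ⟨h, rfl⟩, rfl⟩

lemma minor_entry (arcs : Finset (V × V)) (χv : V → ℝ) (v : V)
    (i j : {u : V // u ≠ v}) :
    minorAt (lapVertex arcs χv) v i j
      = ∑ w ∈ heads arcs ↑i, χv w * (if i = j then 1 else if w = ↑j then -1 else 0) := by
  have hM : minorAt (lapVertex arcs χv) v i j = lapVertex arcs χv ↑i ↑j := rfl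
  by_cases hij : i = j
  · subst hij
    rw [hM]
    simp only [if_pos rfl, mul_one]
    show (if (i:V) = ↑i then ∑ a ∈ arcs.filter (fun a => a.1 = ↑i), χv a.2
      else if ((i:V), (i:V)) ∈ arcs then - χv ↑i else 0) = _
    rw [if_pos rfl]
    rw [heads, Finset.sum_image ?_]
    · apply Finset.sum_congr rfl
      intro a _
      simp
    · intro a ha b hb hab
      obtain ⟨_, ha2⟩ := Finset.mem_filter.1 ha
      obtain ⟨_, hb2⟩ := Finset.mem_filter.1 hb
      exact Prod.ext_iff.2 ⟨ha2.trans hb2.symm, hab⟩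
  · have hij' : (↑i : V) ≠ ↑j := fun h => hij (Subtype.ext h)
    rw [hM]
    show (if (i:V) = ↑j then ∑ a ∈ arcs.filter (fun a => a.1 = ↑i), χv a.2
      else if ((i:V), (j:V)) ∈ arcs then - χv ↑j else 0) = _
    rw [if_neg hij']
    have : ∀ w ∈ heads arcs ↑i,
        χv w * (if i = j then 1 else if w = ↑j then -1 else 0)
          = if w = ↑j then - χv w else 0 := by
      intro w _
      rw [if_neg hij]
      by_cases hw : w = ↑j <;> simp [hw]
    rw [Finset.sum_congr rfl this, Finset.sum_ite_eq' (heads arcs ↑i) (↑j : V) (fun w => - χv w)]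
    by_cases hmem : ((i:V), (j:V)) ∈ arcs
    · rw [if_pos hmem, if_pos (mem_heads.2 hmem)]
    · rw [if_neg hmem, if_neg (fun h => hmem (mem_heads.1 h))]

lemma det_expansion (arcs : Finset (V × V)) (χv : V → ℝ) (v : V) :
    (minorAt (lapVertex arcs χv) v).det =
      ∑ f ∈ Fintype.piFinset (fun i : {u : V // u ≠ v} => heads arcs ↑i),
        (∏ i, χv (f i)) * (Q v f).det := by
  rw [← Matrix.det_transpose (minorAt (lapVertex arcs χv) v), Matrix.det_apply']
  have h2 : ∀ σ : Equiv.Perm {u : V // u ≠ v},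
      ∏ i, (minorAt (lapVertex arcs χv) v)ᵀ (σ i) i
        = ∑ f ∈ Fintype.piFinset (fun i : {u : V // u ≠ v} => heads arcs ↑i),
            (∏ i, χv (f i)) * ∏ i, Q v f i (σ i) := by
    intro σ
    have he : ∀ i : {u : V // u ≠ v}, (minorAt (lapVertex arcs χv) v)ᵀ (σ i) i
        = ∑ w ∈ heads arcs ↑i, χv w * (if i = σ i then 1 else if w = ↑(σ i) then -1 else 0) :=
      fun i => minor_entry arcs χv v i (σ i)
    rw [Finset.prod_congr rfl fun i _ => he i, Finset.prod_univ_sum]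
    apply Finset.sum_congr rfl
    intro f _
    rw [← Finset.prod_mul_distrib]
    rfl
  rw [Finset.sum_congr rfl fun σ _ => by rw [h2 σ, Finset.mul_sum]]
  rw [Finset.sum_comm]
  apply Finset.sum_congr rfl
  intro f _
  rw [← Matrix.det_transpose (Q v f), Matrix.det_apply', Finset.mul_sum]
  apply Finset.sum_congr rfl
  intro σ _
  have ht : ∏ i, (Q v f)ᵀ (σ i) i = ∏ i, Q v f i (σ i) := rfl
  rw [ht]
  ring

lemma kappa_eq_sum (arcs : Finset (V × V)) (χv : V → ℝ) (v : V) :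
    kappaVertexRooted arcs χv v
      = ∑ f ∈ (Fintype.piFinset (fun i : {u : V // u ≠ v} => heads arcs ↑i)).filter
          (fun f => ¬ HasCyc v f), ∏ i, χv (f i) := by
  unfold kappaVertexRooted
  refine (Finset.sum_bij
    (fun (f : {u : V // u ≠ v} → V) (_ : f ∈ _) =>
      Finset.univ.image (fun u : {u : V // u ≠ v} => ((u : V), f u)))
    ?_ ?_ ?_ ?_).symm
  · -- maps into trees
    intro f hf
    obtain ⟨hpi, hnc⟩ := Finset.mem_filter.1 hf
    have hpi' := Fintype.mem_piFinset.1 hpi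
    have hmemT : ∀ a ∈ Finset.univ.image (fun u : {u : V // u ≠ v} => ((u : V), f u)),
        ∃ u : {u : V // u ≠ v}, ((u : V), f u) = a := by
      intro a ha
      obtain ⟨u, _, hu⟩ := Finset.mem_image.1 ha
      exact ⟨u, hu⟩
    rw [trees, Finset.mem_filter, Finset.mem_powerset]
    constructor
    · intro a ha
      obtain ⟨u, rfl⟩ := hmemT a ha
      exact mem_heads.1 (hpi' u)
    · refine ⟨?_, ?_, ?_⟩
      · intro w hw
        refine ⟨(w, f ⟨w, hw⟩),
          ⟨Finset.mem_image.2 ⟨⟨w, hw⟩, Finset.mem_univ _, rfl⟩, rfl⟩, ?_⟩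
        rintro b ⟨hb, hb1⟩
        obtain ⟨u, rfl⟩ := hmemT b hb
        have : u = ⟨w, hw⟩ := Subtype.ext hb1
        rw [this]
      · intro a ha
        obtain ⟨u, rfl⟩ := hmemT a ha
        exact u.2
      · intro x l hch
        apply hnc
        have hR : ∀ a b : V,
            (a, b) ∈ Finset.univ.image (fun u : {u : V // u ≠ v} => ((u : V), f u)) →
              b = fe v f a := by
          intro a b hab
          obtain ⟨u, hu⟩ := hmemT (a, b) hab
          injection hu with h1 h2
          rw [← h1, ← h2, fe_apply]
        have hxy := chain_last _ (fe v f) hR l x x hch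
        have hfirst : ∃ c, (x, c) ∈ Finset.univ.image
            (fun u : {u : V // u ≠ v} => ((u : V), f u)) := by
          cases l with
          | nil =>
            rw [List.nil_append, List.Chain, List.chain_cons] at hch
            exact ⟨x, hch.1⟩
          | cons b t =>
            rw [List.cons_append, List.Chain, List.chain_cons] at hch
            exact ⟨b, hch.1⟩
        obtain ⟨c, hc⟩ := hfirst
        obtain ⟨u, hu⟩ := hmemT (x, c) hc
        have hx_ne : x ≠ v := by
          injection hu with h1 h2
          rw [← h1]; exact u.2
        exact ⟨x, hx_ne, l.length + 1, Nat.succ_pos _, hxy.symm⟩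
  · -- injective
    intro f hf g hg h
    funext u
    have h' : Finset.univ.image (fun w : {u : V // u ≠ v} => ((w : V), f w))
        = Finset.univ.image (fun w : {u : V // u ≠ v} => ((w : V), g w)) := h
    have hmem : ((u : V), f u) ∈ Finset.univ.image
        (fun w : {u : V // u ≠ v} => ((w : V), g w)) := by
      rw [← h']
      exact Finset.mem_image.2 ⟨u, Finset.mem_univ _, rfl⟩
    obtain ⟨w, _, hw⟩ := Finset.mem_image.1 hmem
    injection hw with h1 h2
    have hwu : w = u := Subtype.ext h1
    rw [← h2, hwu]
  · -- surjective
    intro T hT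
    rw [trees, Finset.mem_filter, Finset.mem_powerset] at hT
    obtain ⟨hsub, h1, h2, h3⟩ := hT
    set f : {u : V // u ≠ v} → V := fun u => ((h1 ↑u u.2).exists.choose).2 with hfdef
    have hfu : ∀ u : {u : V // u ≠ v}, ((u : V), f u) ∈ T := by
      intro u
      obtain ⟨hmem', hfst⟩ := (h1 ↑u u.2).exists.choose_spec
      have : (h1 ↑u u.2).exists.choose = ((u : V), f u) := Prod.ext_iff.2 ⟨hfst, rfl⟩
      rw [← this]; exact hmem'
    have huniq : ∀ a ∈ T, ∀ u : {u : V // u ≠ v}, a.1 = ↑u → a = ((u : V), f u) := by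
      intro a ha u hau
      obtain ⟨a₀, _, hun⟩ := h1 ↑u u.2
      have e1 := hun a ⟨ha, hau⟩
      have e2 := hun ((u : V), f u) ⟨hfu u, rfl⟩
      rw [e1, e2]
    have hpi : f ∈ Fintype.piFinset (fun i : {u : V // u ≠ v} => heads arcs ↑i) :=
      Fintype.mem_piFinset.2 fun u => mem_heads.2 (hsub (hfu u))
    have hnc : ¬ HasCyc v f := by
      rintro ⟨u, huv, k, hk, hcyc⟩
      have hsteps : ∀ n < k, ((fe v f)^[n] u, (fe v f)^[n+1] u) ∈ T := by
        intro n hn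
        have hnv : (fe v f)^[n] u ≠ v := iter_ne_root huv hcyc hn.le
        have : (fe v f)^[n+1] u = f ⟨(fe v f)^[n] u, hnv⟩ := by
          rw [Function.iterate_succ_apply']
          exact fe_apply v f ⟨(fe v f)^[n] u, hnv⟩
        rw [this]
        exact hfu ⟨(fe v f)^[n] u, hnv⟩
      have hchain := chain_iterates (fun a b => (a, b) ∈ T) (fe v f) k u hsteps
      have hsplit : (List.range k).map (fun n => (fe v f)^[n+1] u)
          = ((List.range (k-1)).map fun n => (fe v f)^[n+1] u) ++ [u] := by
        conv_lhs => rw [show k = (k-1)+1 from (Nat.succ_pred_eq_of_pos hk).symm]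
        rw [List.range_succ, List.map_append, List.map_singleton]
        rw [show (k-1)+1 = k from Nat.succ_pred_eq_of_pos hk, hcyc]
      rw [hsplit] at hchain
      exact h3 u _ hchain
    refine ⟨f, Finset.mem_filter.2 ⟨hpi, hnc⟩, ?_⟩
    apply Finset.Subset.antisymm
    · intro a ha
      obtain ⟨u, _, rfl⟩ := Finset.mem_image.1 ha
      exact hfu u
    · intro a ha
      have hav : a.1 ≠ v := h2 a ha
      have := huniq a ha ⟨a.1, hav⟩ rfl
      rw [this]
      exact Finset.mem_image.2 ⟨⟨a.1, hav⟩, Finset.mem_univ _, rfl⟩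
  · -- values
    intro f hf
    rw [Finset.prod_image]
    intro u _ w _ h
    exact Subtype.ext (Prod.ext_iff.1 h).1

end VMTT

/-- **Vertex-weighted matrix tree theorem.** -/
theorem vertex_matrix_tree_theorem {V : Type*} [Fintype V] [DecidableEq V]
    (arcs : Finset (V × V)) (χv : V → ℝ)
    (hsimple : ∀ v : V, (v, v) ∉ arcs)
    (hpos : ∀ v : V, 0 < χv v) (v : V) :
    kappaVertexRooted arcs χv v = (minorAt (lapVertex arcs χv) v).det := by
  rw [VMTT.det_expansion arcs χv v, VMTT.kappa_eq_sum arcs χv v]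
  rw [← Finset.sum_filter_add_sum_filter_not
    (Fintype.piFinset (fun i : {u : V // u ≠ v} => VMTT.heads arcs ↑i))
    (fun f => VMTT.HasCyc v f)]
  have hzero : ∑ f ∈ (Fintype.piFinset (fun i : {u : V // u ≠ v} => VMTT.heads arcs ↑i)).filter
      (fun f => VMTT.HasCyc v f), (∏ i, χv (f i)) * (VMTT.Q v f).det = 0 := by
    apply Finset.sum_eq_zero
    intro f hf
    obtain ⟨hpi, hc⟩ := Finset.mem_filter.1 hf
    have hfi : ∀ i : {u : V // u ≠ v}, f i ≠ ↑i := by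
      intro i h
      have := VMTT.mem_heads.1 (Fintype.mem_piFinset.1 hpi i)
      rw [h] at this
      exact hsimple ↑i this
    rw [VMTT.detQ_eq_zero hfi hc, mul_zero]
  rw [hzero, zero_add]
  symm
  apply Finset.sum_congr rfl
  intro f hf
  obtain ⟨_, hnc⟩ := Finset.mem_filter.1 hf
  rw [VMTT.detQ_eq_one hnc, mul_one]
end

section
/- Let D be a weighted digraph with n vertices and m arcs, with vertex weights χ_i and arc weights χ_e, and let M(D) be its middle digraph with vertex weights inherited from D (vertices of D keep their weight; the vertex corresponding to arc e gets weight χ_e). Then the characteristic polynomial of the vertex-weighted Laplacian of M(D) satisfies det(λI_{m+n} − Δ^{vertex}(M(D))) = det(λI_n − Δ^{edge}(D)) · Π_{i=1}^{n} (λ − χ_i − d_i)^{r_i}, where r_i is the indegree of v_i in D and d_i = Σ_{e: t(e)=v_i} χ_e. -/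
open scoped Classical BigOperators

section MiddleDigraph

variable {V : Type*} [Fintype V] [DecidableEq V]

/-- Arc set of the middle digraph `M(D)` on the vertex set `V(D) ⊕ A(D)`:
each arc `e = (u, v)` of `D` is replaced by the directed path `u → e → v`, and
there is an arc `e → f` whenever the head of `e` equals the tail of `f`. -/
noncomputable def midArcs (arcs : Finset (V × V)) :
    Finset ((V ⊕ {a : V × V // a ∈ arcs}) × (V ⊕ {a : V × V // a ∈ arcs})) :=
  Finset.univ.filter (fun p =>
    match p with
    | (Sum.inl u, Sum.inr e) => (e : V × V).1 = u
    | (Sum.inr e, Sum.inl v) => (e : V × V).2 = v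
    | (Sum.inr e, Sum.inr f) => (e : V × V).2 = (f : V × V).1
    | _ => False)

/-- Vertex weights of `M(D)`: vertices coming from `V(D)` keep their vertex weight,
and the vertex corresponding to an arc `e` gets the arc weight `χ_e`. -/
noncomputable def midWeight (arcs : Finset (V × V)) (χv : V → ℝ) (χ : V × V → ℝ) :
    V ⊕ {a : V × V // a ∈ arcs} → ℝ :=
  Sum.elim χv (fun e => χ (e : V × V))

end MiddleDigraph

section MiddleProof
open Matrix Polynomial

variable {V : Type*} [Fintype V] [DecidableEq V]

lemma aux_wOut (arcs : Finset (V × V)) (χ : V × V → ℝ) (u : V) :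
    wOut arcs χ u = ∑ k : V, adjW arcs χ u k := by
  unfold wOut adjW
  rw [show (∑ k : V, if (u, k) ∈ arcs then χ (u, k) else 0)
      = ∑ k ∈ Finset.univ.filter (fun k => (u, k) ∈ arcs), χ (u, k) from
    (Finset.sum_filter _ _).symm]
  apply Finset.sum_nbij' (fun a => a.2) (fun k => (u, k))
  · intro a ha; simp only [Finset.mem_filter] at ha ⊢
    obtain ⟨h1, h2⟩ := ha
    exact ⟨Finset.mem_univ _, by rwa [← h2, Prod.mk.eta]⟩
  · intro k hk; simp only [Finset.mem_filter] at hk ⊢; exact ⟨hk.2, trivial⟩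
  · intro a ha; simp only [Finset.mem_filter] at ha; rw [← ha.2, Prod.mk.eta]
  · intro k _; rfl
  · intro a ha; simp only [Finset.mem_filter] at ha; rw [← ha.2, Prod.mk.eta]

lemma aux_L1 (arcs : Finset (V × V)) (χv : V → ℝ) (χ : V × V → ℝ) (u : V) :
    ∑ a ∈ (midArcs arcs).filter (fun a => a.1 = Sum.inl u), midWeight arcs χv χ a.2
      = wOut arcs χ u := by
  rw [midArcs, Finset.filter_filter, Finset.sum_filter, Fintype.sum_prod_type]
  simp [Fintype.sum_sum_type, midWeight, wOut]
  rw [Finset.sum_comm]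
  have h1 : ∀ (y : {a : V × V // a ∈ arcs}),
      (∑ x : V, if (y : V × V).1 = x ∧ x = u then χ (y : V × V) else 0)
        = if (y : V × V).1 = u then χ (y : V × V) else 0 := by
    intro y; by_cases h : (y : V × V).1 = u
    · simp [h, eq_comm]
    · rw [if_neg h]; apply Finset.sum_eq_zero; intro x _; rw [if_neg]
      rintro ⟨ha, hb⟩; exact h (ha.trans hb)
  rw [Finset.sum_congr rfl (fun y _ => h1 y),
    Finset.sum_attach arcs (fun a => if a.1 = u then χ a else 0), Finset.sum_filter]

lemma aux_L2 (arcs : Finset (V × V)) (χv : V → ℝ) (χ : V × V → ℝ)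
    (e : {a : V × V // a ∈ arcs}) :
    ∑ a ∈ (midArcs arcs).filter (fun a => a.1 = Sum.inr e), midWeight arcs χv χ a.2
      = χv (e : V × V).2 + wOut arcs χ (e : V × V).2 := by
  rw [midArcs, Finset.filter_filter, Finset.sum_filter, Fintype.sum_prod_type]
  simp [Fintype.sum_sum_type, midWeight, wOut]
  rw [Finset.sum_add_distrib]
  congr 1
  · rw [Finset.sum_eq_single_of_mem e (Finset.mem_attach _ _)]
    · simp
    · intro b _ hb
      apply Finset.sum_eq_zero; intro x _; rw [if_neg]; rintro ⟨_, h⟩; exact hb h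
  · rw [Finset.sum_eq_single_of_mem e (Finset.mem_attach _ _)]
    · have h2 : ∀ x1 ∈ arcs.attach, (if ((e : V × V)).2 = (x1.val).1 ∧ e = e then χ x1.val else 0)
          = if (x1.val).1 = ((e : V × V)).2 then χ x1.val else 0 := by
        intro x1 _; simp [eq_comm]
      rw [Finset.sum_congr rfl h2,
        Finset.sum_attach arcs (fun a : V × V => if a.1 = (e : V × V).2 then χ a else 0),
        Finset.sum_filter]
    · intro b _ hb; apply Finset.sum_eq_zero; intro x _; rw [if_neg]; rintro ⟨_, h⟩; exact hb h

/-- Top-right block of the Laplacian of the middle digraph. -/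
noncomputable def midB12 (arcs : Finset (V × V)) (χ : V × V → ℝ) :
    Matrix V {a : V × V // a ∈ arcs} ℝ :=
  fun u e => if (e : V × V).1 = u then -χ (e : V × V) else 0

/-- Bottom-left block of the Laplacian of the middle digraph. -/
noncomputable def midB21 (arcs : Finset (V × V)) (χv : V → ℝ) :
    Matrix {a : V × V // a ∈ arcs} V ℝ :=
  fun e v => if (e : V × V).2 = v then -χv v else 0

/-- Bottom-right block of the Laplacian of the middle digraph. -/
noncomputable def midB22 (arcs : Finset (V × V)) (χv : V → ℝ) (χ : V × V → ℝ) :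
    Matrix {a : V × V // a ∈ arcs} {a : V × V // a ∈ arcs} ℝ :=
  fun e f => if e = f then χv (e : V × V).2 + wOut arcs χ (e : V × V).2
             else if (f : V × V).1 = (e : V × V).2 then -χ (f : V × V) else 0

/-- The head-incidence 0/1 matrix, over polynomials. -/
noncomputable def midR (arcs : Finset (V × V)) :
    Matrix {a : V × V // a ∈ arcs} V ℝ[X] :=
  fun e v => if (e : V × V).2 = v then 1 else 0

/-- The diagonal factor. -/
noncomputable def midLam (arcs : Finset (V × V)) (χv : V → ℝ) (χ : V × V → ℝ) :
    Matrix {a : V × V // a ∈ arcs} {a : V × V // a ∈ arcs} ℝ[X] :=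
  Matrix.diagonal (fun e => X - C (χv (e : V × V).2 + wOut arcs χ (e : V × V).2))

lemma no_loop {arcs : Finset (V × V)} (hsimple : ∀ v : V, (v, v) ∉ arcs)
    (e : {a : V × V // a ∈ arcs}) : (e : V × V).1 ≠ (e : V × V).2 := by
  rintro h
  rcases e with ⟨⟨a, b⟩, hab⟩
  dsimp at h
  subst h
  exact hsimple a hab

lemma lapVertex_mid_eq (arcs : Finset (V × V)) (χv : V → ℝ) (χ : V × V → ℝ) :
    lapVertex (midArcs arcs) (midWeight arcs χv χ) =
      Matrix.fromBlocks (Matrix.diagonal (wOut arcs χ)) (midB12 arcs χ)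
        (midB21 arcs χv) (midB22 arcs χv χ) := by
  ext x y
  cases x with
  | inl u =>
    cases y with
    | inl v =>
      by_cases h : u = v
      · subst h
        simp [lapVertex, Matrix.fromBlocks, Matrix.diagonal, aux_L1 arcs χv χ u]
      · simp [lapVertex, Matrix.fromBlocks, Matrix.diagonal, h, midArcs]
    | inr f =>
      by_cases h : (f : V × V).1 = u
      · simp [lapVertex, Matrix.fromBlocks, midB12, midArcs, midWeight, h]
      · simp [lapVertex, Matrix.fromBlocks, midB12, midArcs, midWeight, h]
  | inr e =>
    cases y with
    | inl v =>
      by_cases h : (e : V × V).2 = v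
      · simp [lapVertex, Matrix.fromBlocks, midB21, midArcs, midWeight, h]
      · simp [lapVertex, Matrix.fromBlocks, midB21, midArcs, midWeight, h]
    | inr f =>
      by_cases h : e = f
      · subst h
        simp [lapVertex, Matrix.fromBlocks, midB22, aux_L2 arcs χv χ e]
      · by_cases h2 : (f : V × V).1 = (e : V × V).2
        · simp [lapVertex, Matrix.fromBlocks, midB22, midArcs, midWeight, h, h2]
        · simp [lapVertex, Matrix.fromBlocks, midB22, midArcs, midWeight, h, h2]
          exact fun hh => absurd hh.symm h2

lemma aux_adj (arcs : Finset (V × V)) (χ : V × V → ℝ) (u v : V) :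
    (∑ e : {a : V × V // a ∈ arcs},
        (if (e : V × V).1 = u then (C (χ (e : V × V)) : ℝ[X]) else 0) *
          (if (e : V × V).2 = v then (1 : ℝ[X]) else 0))
      = C (adjW arcs χ u v) := by
  have h : ∀ e : {a : V × V // a ∈ arcs},
      (if (e : V × V).1 = u then (C (χ (e : V × V)) : ℝ[X]) else 0) *
          (if (e : V × V).2 = v then (1 : ℝ[X]) else 0)
        = if (e : V × V) = (u, v) then C (χ (u, v)) else 0 := by
    rintro ⟨⟨a, b⟩, hab⟩
    by_cases h1 : a = u <;> by_cases h2 : b = v <;> simp [h1, h2, Prod.ext_iff]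
  rw [Finset.sum_congr rfl (fun e _ => h e), Finset.univ_eq_attach,
    Finset.sum_attach arcs (fun a : V × V => if a = (u, v) then (C (χ (u, v)) : ℝ[X]) else 0),
    Finset.sum_ite_eq' arcs (u, v) (fun _ => (C (χ (u, v)) : ℝ[X]))]
  simp [adjW, apply_ite C]


lemma mid_key (arcs : Finset (V × V)) (χv : V → ℝ) (χ : V × V → ℝ)
    (hsimple : ∀ v : V, (v, v) ∉ arcs) :
    Matrix.fromBlocks (1 : Matrix V V ℝ[X]) 0 (-(midR arcs)) 1 *
      Matrix.fromBlocks ((Matrix.diagonal (wOut arcs χ)).charmatrix)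
        (-(midB12 arcs χ).map C) (-(midB21 arcs χv).map C)
        ((midB22 arcs χv χ).charmatrix) *
      Matrix.fromBlocks 1 0 (midR arcs) 1 =
    Matrix.fromBlocks ((lapEdge arcs χ).charmatrix) (-(midB12 arcs χ).map C)
      0 (midLam arcs χv χ) := by
  rw [Matrix.fromBlocks_multiply, Matrix.fromBlocks_multiply]
  simp only [Matrix.one_mul, Matrix.mul_one, Matrix.zero_mul, Matrix.mul_zero,
    Matrix.neg_mul, zero_add, add_zero]
  have hdiag : ∀ a b : V, (Matrix.diagonal (wOut arcs χ)).charmatrix a b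
      = if a = b then X - C (wOut arcs χ a) else 0 := by
    intro a b
    by_cases h : a = b
    · subst h; rw [Matrix.charmatrix_apply_eq, Matrix.diagonal_apply_eq, if_pos rfl]
    · rw [Matrix.charmatrix_apply_ne _ _ _ h, Matrix.diagonal_apply_ne _ h, if_neg h,
        map_zero, neg_zero]
  have h22 : -(midR arcs * -(midB12 arcs χ).map C) + (midB22 arcs χv χ).charmatrix
      = midLam arcs χv χ := by
    ext e f
    have hs : (midR arcs * -(midB12 arcs χ).map C) e f
        = -C (if (f : V × V).1 = (e : V × V).2 then -χ (f : V × V) else 0) := by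
      rw [Matrix.mul_apply]
      simp only [midR, Matrix.neg_apply, Matrix.map_apply, midB12, ite_mul, one_mul, zero_mul]
      rw [Finset.sum_ite_eq]
      simp
    rw [Matrix.add_apply, Matrix.neg_apply, hs, neg_neg]
    by_cases h : e = f
    · subst h
      rw [if_neg (no_loop hsimple e), Matrix.charmatrix_apply_eq, midLam,
        Matrix.diagonal_apply_eq, map_zero, zero_add]
      simp [midB22]
    · rw [Matrix.charmatrix_apply_ne _ _ _ h, midLam, Matrix.diagonal_apply_ne _ h]
      simp [midB22, h]
  have h11 : (Matrix.diagonal (wOut arcs χ)).charmatrix + -((midB12 arcs χ).map C * midR arcs)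
      = (lapEdge arcs χ).charmatrix := by
    ext u v
    have hterm : ∀ e : {a : V × V // a ∈ arcs},
        ((midB12 arcs χ).map C) u e * midR arcs e v
          = -((if (e : V × V).1 = u then (C (χ (e : V × V)) : ℝ[X]) else 0) *
              (if (e : V × V).2 = v then (1 : ℝ[X]) else 0)) := by
      intro e
      by_cases h1 : (e : V × V).1 = u <;> by_cases h2 : (e : V × V).2 = v <;>
        simp [midB12, midR, h1, h2, apply_ite C]
    have hs : ((midB12 arcs χ).map C * midR arcs) u v = -C (adjW arcs χ u v) := by
      rw [Matrix.mul_apply, Finset.sum_congr rfl (fun e _ => hterm e), Finset.sum_neg_distrib,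
        aux_adj arcs χ u v]
    rw [Matrix.add_apply, Matrix.neg_apply, hs, neg_neg]
    have hz : adjW arcs χ u u = 0 := by simp [adjW, hsimple u]
    by_cases h : u = v
    · subst h
      rw [Matrix.charmatrix_apply_eq, Matrix.charmatrix_apply_eq, Matrix.diagonal_apply_eq,
        hz, map_zero, add_zero]
      have hL : lapEdge arcs χ u u = wOut arcs χ u := by
        show (if u = u then _ else _) = _
        rw [if_pos rfl, Finset.sum_erase _ hz, ← aux_wOut arcs χ u]
      rw [hL]
    · rw [Matrix.charmatrix_apply_ne _ _ _ h, Matrix.charmatrix_apply_ne _ _ _ h,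
        Matrix.diagonal_apply_ne _ h]
      simp [lapEdge, h]
  have h21 : -(midR arcs * (Matrix.diagonal (wOut arcs χ)).charmatrix) +
      -(midB21 arcs χv).map C + midLam arcs χv χ * midR arcs = 0 := by
    ext e v
    have hs1 : (midR arcs * (Matrix.diagonal (wOut arcs χ)).charmatrix) e v
        = if (e : V × V).2 = v then X - C (wOut arcs χ v) else 0 := by
      rw [Matrix.mul_apply]
      simp only [midR, ite_mul, one_mul, zero_mul]
      rw [Finset.sum_ite_eq]
      simp only [Finset.mem_univ, if_true, hdiag]
      by_cases h : (e : V × V).2 = v <;> simp [h]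
    have hs2 : (midLam arcs χv χ * midR arcs) e v
        = if (e : V × V).2 = v
            then X - C (χv (e : V × V).2 + wOut arcs χ (e : V × V).2) else 0 := by
      rw [Matrix.mul_apply]
      simp only [midLam, Matrix.diagonal_apply, ite_mul, zero_mul]
      rw [Finset.sum_ite_eq]
      simp [midR, mul_ite]
    rw [Matrix.add_apply, Matrix.add_apply, Matrix.neg_apply, Matrix.neg_apply,
      Matrix.map_apply, hs1, hs2]
    by_cases h : (e : V × V).2 = v
    · rw [h]
      simp [midB21, h, map_add]
      ring
    · simp [midB21, h]
  rw [h22, h11, h21]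

end MiddleProof

open Polynomial in
/-- Characteristic polynomial of the vertex-weighted Laplacian of the middle digraph:
`det(λI − Δ^{vertex}(M(D))) = det(λI − Δ^{edge}(D)) · Π_i (λ − χ_i − d_i)^{r_i}`. -/
theorem charpoly_lapVertex_middle {V : Type*} [Fintype V] [DecidableEq V]
    (arcs : Finset (V × V)) (χv : V → ℝ) (χ : V × V → ℝ)
    (hsimple : ∀ v : V, (v, v) ∉ arcs)
    (hposv : ∀ v : V, 0 < χv v) (hpose : ∀ a ∈ arcs, 0 < χ a) :
    (lapVertex (midArcs arcs) (midWeight arcs χv χ)).charpoly =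
      (lapEdge arcs χ).charpoly *
        ∏ i : V, (X - C (χv i + wOut arcs χ i)) ^ (indeg arcs i) := by
  classical
  unfold Matrix.charpoly
  rw [lapVertex_mid_eq arcs χv χ, Matrix.charmatrix_fromBlocks]
  have hP1 : (Matrix.fromBlocks (1 : Matrix V V ℝ[X]) 0 (-(midR arcs)) 1).det = 1 := by
    rw [Matrix.det_fromBlocks_zero₁₂]; simp
  have hP2 : (Matrix.fromBlocks (1 : Matrix V V ℝ[X]) 0 (midR arcs) 1).det = 1 := by
    rw [Matrix.det_fromBlocks_zero₁₂]; simp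
  have hd := congrArg Matrix.det (mid_key arcs χv χ hsimple)
  rw [Matrix.det_mul, Matrix.det_mul, hP1, hP2, one_mul, mul_one,
    Matrix.det_fromBlocks_zero₂₁] at hd
  rw [hd]
  congr 1
  rw [midLam, Matrix.det_diagonal, Finset.univ_eq_attach,
    Finset.prod_attach arcs (fun a : V × V => X - C (χv a.2 + wOut arcs χ a.2)),
    ← Finset.prod_fiberwise_of_maps_to (g := fun a : V × V => a.2) (t := Finset.univ)
      (fun a _ => Finset.mem_univ _)]
  apply Finset.prod_congr rfl
  intro i _
  have hc : ∀ a ∈ arcs.filter (fun a => a.2 = i),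
      (X - C (χv a.2 + wOut arcs χ a.2) : ℝ[X]) = X - C (χv i + wOut arcs χ i) := by
    intro a ha
    rw [(Finset.mem_filter.mp ha).2]
  rw [Finset.prod_congr rfl hc, Finset.prod_const, indeg]
end

section
/- Main theorem: Let D be a weighted digraph with n vertices, vertex weights χ_i and arc weights χ_e, and M(D) its vertex-weighted middle digraph. Then κ^{vertex}(M(D),χ) = κ^{edge}(D,χ) · Π_{i=1}^{n} (χ_i + d_i)^{r_i}, where r_i is the indegree of v_i in D and d_i = Σ_{e: t(e)=v_i} χ_e. -/
open scoped Classical BigOperators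

section DetFunctional
variable {W : Type*} [Fintype W] [DecidableEq W]

omit [Fintype W] [DecidableEq W] in
lemma iter_reach_absorb {nxt : W → W} {r : W} (hr : nxt r = r) {w : W} {k : ℕ}
    (h : nxt^[k] w = r) {m : ℕ} (hm : k ≤ m) : nxt^[m] w = r := by
  obtain ⟨j, rfl⟩ := Nat.exists_eq_add_of_le hm
  rw [add_comm, Function.iterate_add_apply, h, Function.iterate_fixed hr]

omit [Fintype W] [DecidableEq W] in
lemma iter_mul_fixed {nxt : W → W} {p : W} {k : ℕ} (hp : nxt^[k] p = p) (c : ℕ) :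
    nxt^[k * c] p = p := by
  rw [Function.iterate_mul]
  exact Function.iterate_fixed hp c

omit [Fintype W] [DecidableEq W] in
lemma periodic_not_reach {nxt : W → W} {r : W} (hr : nxt r = r) {p : W} {k : ℕ}
    (hk : 0 < k) (hp : nxt^[k] p = p) (hpr : p ≠ r) : ∀ m, nxt^[m] p ≠ r := by
  intro m hm
  apply hpr
  have hge : m ≤ k * (m + 1) := by nlinarith
  have := iter_reach_absorb hr hm hge
  rw [iter_mul_fixed hp (m+1)] at this
  exact this

/-- Existence of a periodic point on a non-absorbed orbit. -/
lemma exists_periodic {nxt : W → W} {r : W} {w : W}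
    (hw : ∀ m, nxt^[m] w ≠ r) :
    ∃ (p : W) (k : ℕ), 0 < k ∧ nxt^[k] p = p ∧ p ≠ r ∧ (∀ m, nxt^[m] p ≠ r) := by
  have hcard : Fintype.card W < Fintype.card (Fin (Fintype.card W + 1)) := by simp
  obtain ⟨i, j, hij, heq⟩ :=
    Fintype.exists_ne_map_eq_of_card_lt (fun i : Fin (Fintype.card W + 1) => nxt^[(i : ℕ)] w) hcard
  have key : ∀ a b : ℕ, a < b → nxt^[a] w = nxt^[b] w →
      ∃ (p : W) (k : ℕ), 0 < k ∧ nxt^[k] p = p ∧ p ≠ r ∧ (∀ m, nxt^[m] p ≠ r) := by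
    intro a b hab he
    refine ⟨nxt^[a] w, b - a, by omega, ?_, hw a, fun m => ?_⟩
    · rw [← Function.iterate_add_apply, Nat.sub_add_cancel hab.le]
      exact he.symm
    · rw [← Function.iterate_add_apply]; exact hw _
  have hne : (i : ℕ) ≠ (j : ℕ) := fun h => hij (Fin.ext h)
  rcases lt_or_gt_of_ne hne with h | h
  · exact key _ _ h heq
  · exact key _ _ h heq.symm

lemma detFunctional (r : W) (nxt : W → W) (hr : nxt r = r) :
    (Matrix.of fun u v : {w : W // w ≠ r} =>
        (if u = v then (1:ℝ) else 0) - (if nxt u = (v : W) then 1 else 0)).det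
      = if ∀ w : W, ∃ k, nxt^[k] w = r then 1 else 0 := by
  set S := {w : W // w ≠ r}
  set M : Matrix S S ℝ := Matrix.of fun u v : S =>
      (if u = v then (1:ℝ) else 0) - (if nxt u = (v : W) then 1 else 0) with hM
  by_cases hac : ∀ w : W, ∃ k, nxt^[k] w = r
  · rw [if_pos hac]
    set steps : W → ℕ := fun w => Nat.find (hac w) with hsteps
    have hspec : ∀ w, nxt^[steps w] w = r := fun w => Nat.find_spec (hac w)
    have hpos : ∀ w, w ≠ r → 0 < steps w := by
      intro w hw
      rcases Nat.eq_zero_or_pos (steps w) with h | h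
      · exfalso; apply hw; have := hspec w; rw [h] at this; exact this
      · exact h
    have hdec : ∀ w, w ≠ r → steps (nxt w) < steps w := by
      intro w hw
      have h1 : nxt^[steps w - 1] (nxt w) = r := by
        rw [← Function.iterate_succ_apply, Nat.succ_eq_add_one, Nat.sub_add_cancel (hpos w hw)]
        exact hspec w
      have h2 : steps (nxt w) ≤ steps w - 1 := Nat.find_le h1
      have := hpos w hw
      omega
    set b : S → ℤ := fun u => -(steps (u : W) : ℤ) with hb
    have htri : M.BlockTriangular b := by
      intro u v hlt
      have hlt' : steps (u : W) < steps (v : W) := by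
        simp only [hb, neg_lt_neg_iff] at hlt
        exact_mod_cast hlt
      have huv : u ≠ v := by rintro rfl; exact lt_irrefl _ hlt'
      have hnv : nxt (u : W) ≠ (v : W) := by
        intro h
        have := hdec (u : W) u.2
        rw [h] at this
        omega
      simp [hM, huv, hnv]
    rw [htri.det]
    apply Finset.prod_eq_one
    intro a _
    have hblk : M.toSquareBlock b a = 1 := by
      ext u v
      rcases u with ⟨u, hu⟩
      rcases v with ⟨v, hv⟩
      by_cases huv : u = v
      · subst huv
        have hnu : nxt (u : W) ≠ (u : W) := by
          intro h
          have := hdec (u : W) u.2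
          rw [h] at this
          omega
        simp [Matrix.toSquareBlock, Matrix.toSquareBlockProp, hM, Matrix.one_apply, hnu]
      · have hst : steps (u : W) = steps (v : W) := by
          have : b u = b v := hu.trans hv.symm
          simp only [hb, neg_inj] at this
          exact_mod_cast this
        have hnv : nxt (u : W) ≠ (v : W) := by
          intro h
          have := hdec (u : W) u.2
          rw [h, hst] at this
          omega
        simp [Matrix.toSquareBlock, Matrix.toSquareBlockProp, hM, Matrix.one_apply, huv, hnv,
          Subtype.ext_iff]
    rw [hblk, Matrix.det_one]
  · rw [if_neg hac]
    push_neg at hac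
    obtain ⟨w₀, hw₀⟩ := hac
    obtain ⟨p, k, hk, hp, hpr, hporb⟩ := exists_periodic hw₀
    set P : Finset S := Finset.univ.filter
      (fun u : S => ∃ k, 0 < k ∧ nxt^[k] (u : W) = (u : W)) with hP
    have hmemP : ∀ u : S, u ∈ P ↔ ∃ k, 0 < k ∧ nxt^[k] (u : W) = (u : W) := by
      intro u; simp [hP]
    have hnr : ∀ u : S, u ∈ P → nxt (u : W) ≠ r := by
      rintro u hu h
      obtain ⟨k', hk', hper⟩ := (hmemP u).1 hu
      exact periodic_not_reach hr hk' hper u.2 1 h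
    have hstepP : ∀ (u : S) (hu : u ∈ P), (⟨nxt (u : W), hnr u hu⟩ : S) ∈ P := by
      rintro u hu
      obtain ⟨k', hk', hper⟩ := (hmemP u).1 hu
      rw [hmemP]
      exact ⟨k', hk', by rw [← Function.iterate_succ_apply, Function.iterate_succ_apply', hper]⟩
    have hPmem : (⟨p, hpr⟩ : S) ∈ P := (hmemP _).2 ⟨k, hk, hp⟩
    set x : S → ℝ := fun v => if v ∈ P then 1 else 0 with hx
    have hxne : x ≠ 0 := by
      intro h
      have := congrFun h ⟨p, hpr⟩
      simp [hx, hPmem] at this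
    have hvm : Matrix.vecMul x M = 0 := by
      funext v
      have h0 : Matrix.vecMul x M v = ∑ u : S, x u * M u v := by
        simp [Matrix.vecMul, dotProduct]
      have h1 : ∑ u : S, x u * M u v = ∑ u ∈ P, M u v := by
        calc ∑ u : S, x u * M u v = ∑ u : S, (if u ∈ P then M u v else 0) := by
              apply Finset.sum_congr rfl
              intro u _
              by_cases hu : u ∈ P <;> simp [hx, hu]
          _ = ∑ u ∈ P, M u v := by rw [Finset.sum_ite_mem, Finset.univ_inter]
      have h2 : ∑ u ∈ P, M u v
          = (∑ u ∈ P, if u = v then (1:ℝ) else 0)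
            - ∑ u ∈ P, (if nxt (u : W) = (v : W) then (1:ℝ) else 0) := by
        rw [← Finset.sum_sub_distrib]
        rfl
      have h3 : (∑ u ∈ P, if u = v then (1:ℝ) else 0) = if v ∈ P then 1 else 0 :=
        Finset.sum_ite_eq' P v (fun _ => (1:ℝ))
      have h4 : (∑ u ∈ P, if nxt (u : W) = (v : W) then (1:ℝ) else 0)
          = if v ∈ P then 1 else 0 := by
        by_cases hv : v ∈ P
        · obtain ⟨kv, hkv, hpv⟩ := (hmemP v).1 hv
          have hv1 : nxt^[kv - 1 + 1] (v : W) = (v : W) := by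
            rw [Nat.sub_add_cancel hkv]; exact hpv
          set u₀w : W := nxt^[kv - 1] (v : W) with hu₀w
          have hu0nxt : nxt u₀w = (v : W) := by
            rw [Function.iterate_succ_apply'] at hv1; exact hv1
          have hu0r : u₀w ≠ r := fun h => v.2 (by rw [← hu0nxt, h, hr])
          set u₀ : S := ⟨u₀w, hu0r⟩ with hu₀
          have hu0per : nxt^[kv] u₀w = u₀w := by
            rw [hu₀w, ← Function.iterate_add_apply, add_comm, Function.iterate_add_apply, hpv]
          have hu0P : u₀ ∈ P := (hmemP u₀).2 ⟨kv, hkv, hu0per⟩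
          have huniq : ∀ u ∈ P, (nxt (u : W) = (v : W) ↔ u = u₀) := by
            intro u hu
            constructor
            · intro h
              obtain ⟨ku, hku, hpu⟩ := (hmemP u).1 hu
              have hge : 1 ≤ ku * kv := Nat.one_le_iff_ne_zero.2 (by positivity)
              have e1 : nxt^[ku * kv - 1] (v : W) = (u : W) :=
                calc nxt^[ku * kv - 1] (v : W) = nxt^[ku * kv - 1] (nxt (u : W)) := by rw [h]
                  _ = nxt^[ku * kv - 1 + 1] (u : W) :=
                      (Function.iterate_succ_apply nxt _ _).symm
                  _ = nxt^[ku * kv] (u : W) := by rw [Nat.sub_add_cancel hge]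
                  _ = (u : W) := iter_mul_fixed hpu kv
              have e2 : nxt^[ku * kv - 1] (v : W) = u₀w := by
                rw [show ku * kv - 1 = kv * (ku - 1) + (kv - 1) by
                    obtain ⟨m, rfl⟩ : ∃ m, ku = m + 1 := ⟨ku - 1, by omega⟩
                    rw [Nat.add_sub_cancel, ← Nat.add_sub_assoc hkv]
                    congr 1
                    ring,
                  Function.iterate_add_apply, ← hu₀w]
                exact iter_mul_fixed hu0per (ku - 1)
              exact Subtype.ext (by rw [← e1, e2])
            · rintro rfl
              exact hu0nxt
          have : (∑ u ∈ P, if nxt (u : W) = (v : W) then (1:ℝ) else 0)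
              = ∑ u ∈ P, if u = u₀ then (1:ℝ) else 0 := by
            apply Finset.sum_congr rfl
            intro u hu
            rw [if_congr (huniq u hu) rfl rfl]
          rw [this, Finset.sum_ite_eq' P u₀ (fun _ => (1:ℝ)), if_pos hu0P, if_pos hv]
        · rw [if_neg hv]
          apply Finset.sum_eq_zero
          intro u hu
          rw [if_neg]
          intro h
          apply hv
          have := hstepP u hu
          rwa [show (⟨nxt (u:W), hnr u hu⟩ : S) = v from Subtype.ext h] at this
      rw [h0, h1, h2, h3, h4, sub_self]
      simp
    exact (Matrix.exists_vecMul_eq_zero_iff.1 ⟨x, hxne, hvm⟩)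

end DetFunctional

section MatrixTree
variable {W : Type*} [Fintype W] [DecidableEq W]

omit [Fintype W] [DecidableEq W] in
lemma chain_of_iterates {R : W → W → Prop} (nxt : W → W) :
    ∀ (n : ℕ) (p : W), (∀ i < n, R (nxt^[i] p) (nxt^[i+1] p)) →
      List.Chain R p ((List.range n).map (fun i => nxt^[i+1] p)) := by
  intro n
  induction n with
  | zero => intro p _; exact List.Chain.nil
  | succ m ih =>
    intro p hp
    rw [List.range_succ_eq_map, List.map_cons, List.map_map]
    refine List.Chain.cons (by simpa using hp 0 (by omega)) ?_
    have heq : ((List.range m).map ((fun i => nxt^[i+1] p) ∘ (· + 1)))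
        = (List.range m).map (fun i => nxt^[i+1] (nxt p)) := by
      apply List.map_congr_left
      intro i _
      simp only [Function.comp_apply]
      rw [show i + 1 + 1 = (i + 1) + 1 from rfl, Function.iterate_succ_apply,
        Function.iterate_succ_apply]
    rw [heq]
    exact ih (nxt p) (fun i hi => by
      rw [← Function.iterate_succ_apply, ← Function.iterate_succ_apply]
      exact hp (i+1) (by omega))

omit [Fintype W] [DecidableEq W] in
lemma chain_to_iterate {R : W → W → Prop} {nxt : W → W}
    (hR : ∀ a b, R a b → b = nxt a) :
    ∀ (l : List W) (w v : W), List.Chain R w (l ++ [v]) → v = nxt^[l.length + 1] w := by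
  intro l
  induction l with
  | nil =>
    intro w v h
    rw [List.nil_append] at h
    rcases h with _ | ⟨hR1, _⟩
    simpa using hR _ _ (by assumption)
  | cons b l' ih =>
    intro w v h
    rw [List.cons_append] at h
    rcases h with _ | _ | ⟨hR1, h2⟩
    have hv := ih b v h2
    rw [hv, hR _ _ hR1, List.length_cons]
    exact (Function.iterate_succ_apply nxt (l'.length + 1) w).symm

omit [Fintype W] [DecidableEq W] in
lemma chain_first_rel {R : W → W → Prop} (l : List W) (w v : W)
    (h : List.Chain R w (l ++ [v])) : ∃ b, R w b := by
  cases l with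
  | nil => rw [List.nil_append] at h; rcases h with _ | ⟨h1, _⟩; exact ⟨v, by assumption⟩
  | cons b l' => rw [List.cons_append] at h; rcases h with _ | ⟨h1, _⟩; exact ⟨b, by assumption⟩

/-- The directed weighted Matrix-Tree theorem for this setup. -/
theorem det_minor_lapEdge (arcs : Finset (W × W)) (χ : W × W → ℝ)
    (hl : ∀ a ∈ arcs, a.1 ≠ a.2) (r : W) :
    (minorAt (lapEdge arcs χ) r).det = kappaEdgeRooted arcs χ r := by
  classical
  set out : {u : W // u ≠ r} → Finset (W × W) :=
    fun u => arcs.filter (fun a => a.1 = (u : W)) with hout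
  have hout_mem : ∀ (u : {u : W // u ≠ r}) (a : W × W),
      a ∈ out u ↔ a ∈ arcs ∧ a.1 = (u : W) := by
    intro u a; simp [hout]
  have hnoloop : ∀ u₀ : W, (u₀, u₀) ∉ arcs := fun u₀ h => hl _ h rfl
  have hsum_out : ∀ u₀ : W,
      ∑ k : W, adjW arcs χ u₀ k = ∑ a ∈ arcs.filter (fun a => a.1 = u₀), χ a := by
    intro u₀
    have h1 : ∀ k : W, adjW arcs χ u₀ k = ∑ a ∈ arcs, if a = (u₀, k) then χ a else 0 := by
      intro k
      rw [Finset.sum_ite_eq' arcs (u₀, k) χ]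
      rfl
    simp_rw [h1]
    rw [Finset.sum_comm, Finset.sum_filter]
    apply Finset.sum_congr rfl
    intro a _
    by_cases h : a.1 = u₀
    · rw [if_pos h]
      have hiff : ∀ k : W, (a = (u₀, k)) ↔ (k = a.2) := by
        intro k
        constructor
        · rintro rfl; rfl
        · rintro rfl
          rw [Prod.ext_iff]
          exact ⟨h, rfl⟩
      calc ∑ k : W, (if a = (u₀, k) then χ a else 0)
          = ∑ k : W, (if k = a.2 then χ a else 0) :=
            Finset.sum_congr rfl (fun k _ => if_congr (hiff k) rfl rfl)
        _ = χ a := by rw [Finset.sum_ite_eq' Finset.univ a.2 (fun _ => χ a), if_pos (Finset.mem_univ _)]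
    · rw [if_neg h]
      apply Finset.sum_eq_zero
      intro k _
      rw [if_neg]
      rintro rfl
      exact h rfl
  -- Step A : row decomposition
  have hrow : minorAt (lapEdge arcs χ) r
      = Matrix.of (fun u : {u : W // u ≠ r} => ∑ a ∈ out u, χ a • (fun v : {u : W // u ≠ r} =>
          (if (u : W) = (v : W) then (1:ℝ) else 0) - (if a.2 = (v : W) then 1 else 0))) := by
    ext u v
    have hR : Matrix.of (fun u : {u : W // u ≠ r} => ∑ a ∈ out u, χ a • (fun v : {u : W // u ≠ r} =>
          (if (u : W) = (v : W) then (1:ℝ) else 0) - (if a.2 = (v : W) then 1 else 0))) u v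
        = ∑ a ∈ out u, χ a * ((if (u : W) = (v : W) then (1:ℝ) else 0)
            - (if a.2 = (v : W) then 1 else 0)) := by
      simp [Finset.sum_apply]
    rw [hR]
    by_cases huv : (u : W) = (v : W)
    · have huv' : u = v := Subtype.ext huv
      subst huv'
      have hL : minorAt (lapEdge arcs χ) r u u
          = ∑ k ∈ Finset.univ.erase (u : W), adjW arcs χ (u : W) k := by
        simp [minorAt, lapEdge]
      rw [hL]
      have hz : adjW arcs χ (u : W) (u : W) = 0 := by
        simp [adjW, hnoloop (u : W)]
      rw [Finset.sum_erase Finset.univ hz, hsum_out]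
      refine Finset.sum_congr (by simp [hout]) ?_
      intro a ha
      obtain ⟨ha1, ha2⟩ := (hout_mem u a).1 ha
      have : a.2 ≠ (u : W) := by
        rw [← ha2]; exact (hl a ha1).symm
      rw [if_pos rfl, if_neg this, sub_zero, mul_one]
    · have hL : minorAt (lapEdge arcs χ) r u v = - adjW arcs χ (u : W) (v : W) := by
        simp [minorAt, lapEdge, huv]
      rw [hL]
      have : ∑ a ∈ out u, χ a * ((if (u : W) = (v : W) then (1:ℝ) else 0)
            - (if a.2 = (v : W) then 1 else 0))
          = - ∑ a ∈ out u, (if a.2 = (v : W) then χ a else 0) := by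
        rw [← Finset.sum_neg_distrib]
        apply Finset.sum_congr rfl
        intro a _
        rw [if_neg huv]
        by_cases h : a.2 = (v : W) <;> simp [h]
      rw [this]
      congr 1
      rw [hout]
      simp only []
      rw [Finset.sum_filter]
      have : ∀ a ∈ arcs, (if a.1 = (u:W) then (if a.2 = (v:W) then χ a else 0) else 0)
          = (if a = ((u:W), (v:W)) then χ a else 0) := by
        intro a _
        by_cases h1 : a.1 = (u : W) <;> by_cases h2 : a.2 = (v : W)
        · rw [if_pos h1, if_pos h2, if_pos (Prod.ext h1 h2)]
        · rw [if_pos h1, if_neg h2, if_neg (fun h => h2 (by rw [h]))]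
        · rw [if_neg h1, if_neg (fun h => h1 (by rw [h]))]
        · rw [if_neg h1, if_neg (fun h => h1 (by rw [h]))]
      rw [Finset.sum_congr rfl this, Finset.sum_ite_eq' arcs ((u:W), (v:W)) χ]
      rfl
  rw [hrow]
  -- Step B : multilinear expansion
  have hdet : (Matrix.of (fun u : {u : W // u ≠ r} => ∑ a ∈ out u, χ a • (fun v : {u : W // u ≠ r} =>
          (if (u : W) = (v : W) then (1:ℝ) else 0) - (if a.2 = (v : W) then 1 else 0)))).det
      = ∑ f ∈ Fintype.piFinset out,
          (∏ u : {u : W // u ≠ r}, χ (f u)) •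
            (Matrix.of (fun u v : {u : W // u ≠ r} =>
              (if (u : W) = (v : W) then (1:ℝ) else 0) - (if (f u).2 = (v : W) then 1 else 0))).det := by
    have := MultilinearMap.map_sum_finset
      (Matrix.detRowAlternating (n := {u : W // u ≠ r}) (R := ℝ)).toMultilinearMap
      (fun (u : {u : W // u ≠ r}) (a : W × W) => χ a • (fun v : {u : W // u ≠ r} =>
          (if (u : W) = (v : W) then (1:ℝ) else 0) - (if a.2 = (v : W) then 1 else 0)))
      out
    rw [show (Matrix.of (fun u : {u : W // u ≠ r} => ∑ a ∈ out u, χ a • (fun v : {u : W // u ≠ r} =>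
          (if (u : W) = (v : W) then (1:ℝ) else 0) - (if a.2 = (v : W) then 1 else 0)))).det
        = (Matrix.detRowAlternating (n := {u : W // u ≠ r}) (R := ℝ)).toMultilinearMap
            (fun u : {u : W // u ≠ r} => ∑ a ∈ out u, χ a • (fun v : {u : W // u ≠ r} =>
          (if (u : W) = (v : W) then (1:ℝ) else 0) - (if a.2 = (v : W) then 1 else 0))) from rfl, this]
    apply Finset.sum_congr rfl
    intro f _
    exact MultilinearMap.map_smul_univ _ (fun u => χ (f u))
      (fun u (v : {u : W // u ≠ r}) =>
        (if (u : W) = (v : W) then (1:ℝ) else 0) - (if (f u).2 = (v : W) then 1 else 0))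
  rw [hdet]
  -- Step C : each determinant is 0 or 1
  have hC : ∀ f ∈ Fintype.piFinset out,
      (Matrix.of (fun u v : {u : W // u ≠ r} =>
          (if (u : W) = (v : W) then (1:ℝ) else 0) - (if (f u).2 = (v : W) then 1 else 0))).det
      = if (∀ w : W, ∃ k,
            (fun w' => if h : w' = r then r else (f ⟨w', h⟩).2)^[k] w = r) then 1 else 0 := by
    intro f _
    set nxt : W → W := fun w' => if h : w' = r then r else (f ⟨w', h⟩).2 with hnxt
    have h1 : (Matrix.of (fun u v : {u : W // u ≠ r} =>
          (if (u : W) = (v : W) then (1:ℝ) else 0) - (if (f u).2 = (v : W) then 1 else 0)))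
        = Matrix.of (fun u v : {w : W // w ≠ r} =>
          (if u = v then (1:ℝ) else 0) - (if nxt u = (v : W) then 1 else 0)) := by
      ext u v
      have e1 : ((u : W) = (v : W)) ↔ (u = v) := ⟨fun h => Subtype.ext h, fun h => by rw [h]⟩
      have e2 : nxt (u : W) = (f u).2 := dif_neg u.2
      simp only [Matrix.of_apply]
      rw [if_congr e1 rfl rfl, e2]
    rw [h1, detFunctional r nxt (dif_pos rfl)]
  rw [Finset.sum_congr rfl (fun f hf => by rw [hC f hf])]
  -- Step D : bijection with spanning trees
  have hstep : ∀ f ∈ Fintype.piFinset out,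
      (∏ u : {u : W // u ≠ r}, χ (f u)) •
        (if (∀ w : W, ∃ k, (fun w' => if h : w' = r then r else (f ⟨w', h⟩).2)^[k] w = r)
          then (1:ℝ) else 0)
      = (if (∀ w : W, ∃ k, (fun w' => if h : w' = r then r else (f ⟨w', h⟩).2)^[k] w = r)
          then (∏ u : {u : W // u ≠ r}, χ (f u)) else 0) := by
    intro f _
    by_cases h : (∀ w : W, ∃ k, (fun w' => if h : w' = r then r else (f ⟨w', h⟩).2)^[k] w = r) <;>
      simp [h]
  rw [Finset.sum_congr rfl hstep, ← Finset.sum_filter]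
  -- now the bijection
  unfold kappaEdgeRooted
  apply Finset.sum_bij (i := fun f _ => Finset.image (fun u => f u) Finset.univ)
  · -- membership
    intro f hf
    rw [Finset.mem_filter] at hf
    obtain ⟨hf1, hf2⟩ := hf
    rw [Fintype.mem_piFinset] at hf1
    set nxt : W → W := fun w' => if h : w' = r then r else (f ⟨w', h⟩).2 with hnxt
    have hmem : ∀ u, f u ∈ arcs ∧ (f u).1 = (u : W) := fun u => (hout_mem u (f u)).1 (hf1 u)
    unfold trees
    rw [Finset.mem_filter, Finset.mem_powerset]
    refine ⟨fun a ha => ?_, ?_, ?_, ?_⟩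
    · rw [Finset.mem_image] at ha
      obtain ⟨u, _, rfl⟩ := ha
      exact (hmem u).1
    · -- unique out-arc
      intro v hv
      refine ⟨f ⟨v, hv⟩, ⟨Finset.mem_image.2 ⟨⟨v, hv⟩, Finset.mem_univ _, rfl⟩, (hmem ⟨v, hv⟩).2⟩, ?_⟩
      rintro y ⟨hy1, hy2⟩
      rw [Finset.mem_image] at hy1
      obtain ⟨u', _, rfl⟩ := hy1
      have : u' = ⟨v, hv⟩ := Subtype.ext (by rw [← (hmem u').2, hy2])
      rw [this]
    · -- tails ≠ r
      intro a ha
      rw [Finset.mem_image] at ha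
      obtain ⟨u, _, rfl⟩ := ha
      rw [(hmem u).2]
      exact u.2
    · -- no cycles
      intro v l hchain
      have hRnxt : ∀ a b : W, (a, b) ∈ Finset.image (fun u => f u) Finset.univ →
          (a ≠ r ∧ b = nxt a) := by
        intro a b hab
        rw [Finset.mem_image] at hab
        obtain ⟨u, _, hu⟩ := hab
        have ha : a = (u : W) := by rw [← (hmem u).2, hu]
        constructor
        · rw [ha]; exact u.2
        · subst ha
          have : nxt (u : W) = (f u).2 := dif_neg u.2
          rw [this, hu]
      have hiter := chain_to_iterate (R := fun a b => (a, b) ∈ Finset.image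
          (fun u => f u) Finset.univ) (fun a b h => (hRnxt a b h).2) l v v hchain
      obtain ⟨b, hb⟩ := chain_first_rel l v v hchain
      have hvr : v ≠ r := (hRnxt v b hb).1
      have := periodic_not_reach (r := r) (dif_pos rfl) (k := l.length + 1)
        (by omega) hiter.symm hvr
      obtain ⟨k, hk⟩ := hf2 v
      exact this k hk
  · -- injectivity
    intro f1 hf1 f2 hf2 heq
    rw [Finset.mem_filter, Fintype.mem_piFinset] at hf1 hf2
    funext u
    have h1 : f1 u ∈ Finset.image (fun u => f2 u) Finset.univ := by
      rw [← heq]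
      exact Finset.mem_image.2 ⟨u, Finset.mem_univ _, rfl⟩
    rw [Finset.mem_image] at h1
    obtain ⟨u', _, hu'⟩ := h1
    have t1 : (f1 u).1 = (u : W) := ((hout_mem u (f1 u)).1 (hf1.1 u)).2
    have t2 : (f2 u').1 = (u' : W) := ((hout_mem u' (f2 u')).1 (hf2.1 u')).2
    have : u' = u := Subtype.ext (by rw [← t2, hu', t1])
    rw [← hu', this]
  · -- surjectivity
    intro T hT
    unfold trees at hT
    rw [Finset.mem_filter, Finset.mem_powerset] at hT
    obtain ⟨hTsub, hT1, hT2, hT3⟩ := hT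
    choose g hg hguniq using fun (u : {u : W // u ≠ r}) => hT1 (u : W) u.2
    refine ⟨fun u => g u, ?_, ?_⟩
    · -- membership in the filtered set
      rw [Finset.mem_filter, Fintype.mem_piFinset]
      have hgmem : ∀ u, g u ∈ out u := by
        intro u
        rw [hout_mem]
        exact ⟨hTsub (hg u).1, (hg u).2⟩
      refine ⟨hgmem, ?_⟩
      set nxt : W → W := fun w' => if h : w' = r then r else (g ⟨w', h⟩).2 with hnxt
      by_contra hna
      push_neg at hna
      obtain ⟨w₀, hw₀⟩ := hna
      obtain ⟨p, k, hk, hp, hpr, hporb⟩ := exists_periodic hw₀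
      -- build a chain and contradict hT3
      have hRstep : ∀ i, (nxt^[i] p, nxt^[i+1] p) ∈ T := by
        intro i
        have hir : nxt^[i] p ≠ r := hporb i
        have : nxt^[i+1] p = nxt (nxt^[i] p) := Function.iterate_succ_apply' nxt i p
        rw [this]
        have e : nxt (nxt^[i] p) = (g ⟨nxt^[i] p, hir⟩).2 := dif_neg hir
        rw [e]
        have : (nxt^[i] p, (g ⟨nxt^[i] p, hir⟩).2) = g ⟨nxt^[i] p, hir⟩ := by
          apply Prod.ext
          · exact ((hg ⟨nxt^[i] p, hir⟩).2).symm
          · rfl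
        rw [this]
        exact (hg _).1
      obtain ⟨m, rfl⟩ : ∃ m, k = m + 1 := ⟨k - 1, by omega⟩
      have hchain := chain_of_iterates (R := fun a b => (a, b) ∈ T) nxt (m + 1) p
        (fun i _ => hRstep i)
      rw [List.range_succ, List.map_append, List.map_singleton] at hchain
      rw [hp] at hchain
      exact absurd hchain (hT3 p _)
    · -- image equals T
      ext a
      rw [Finset.mem_image]
      constructor
      · rintro ⟨u, _, rfl⟩
        exact (hg u).1
      · intro haT
        have har : a.1 ≠ r := hT2 a haT
        refine ⟨⟨a.1, har⟩, Finset.mem_univ _, ?_⟩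
        exact (hguniq ⟨a.1, har⟩ a ⟨haT, rfl⟩).symm
  · -- weights
    intro f hf
    rw [Finset.mem_filter, Fintype.mem_piFinset] at hf
    rw [Finset.prod_image]
    intro u1 _ u2 _ heq
    have t1 : (f u1).1 = (u1 : W) := ((hout_mem u1 (f u1)).1 (hf.1 u1)).2
    have t2 : (f u2).1 = (u2 : W) := ((hout_mem u2 (f u2)).1 (hf.1 u2)).2
    exact Subtype.ext (by rw [← t1, show f u1 = f u2 from heq, t2])

end MatrixTree

section Coeff
open Polynomial

variable {n : Type*} [Fintype n] [DecidableEq n]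

/-- The matrix `X·I + C` over `ℝ[X]`. -/
noncomputable def Xd (C : Matrix n n ℝ) : Matrix n n ℝ[X] :=
  Matrix.of fun i j => (if i = j then (X : ℝ[X]) else 0) + Polynomial.C (C i j)

omit [Fintype n] [DecidableEq n] in
lemma coeff1_mul (p q : ℝ[X]) :
    (p * q).coeff 1 = p.coeff 0 * q.coeff 1 + p.coeff 1 * q.coeff 0 := by
  rw [Polynomial.coeff_mul, show Finset.HasAntidiagonal.antidiagonal (1:ℕ) = {(0,1),(1,0)} by decide,
    Finset.sum_insert (by decide), Finset.sum_singleton]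

lemma coeff_zero_det (C : Matrix n n ℝ) : (Xd C).det.coeff 0 = C.det := by
  rw [Polynomial.coeff_zero_eq_eval_zero]
  have h : Polynomial.eval 0 (Xd C).det = ((Xd C).map (Polynomial.evalRingHom (0:ℝ))).det :=
    RingHom.map_det (Polynomial.evalRingHom (0:ℝ)) (Xd C)
  rw [h]
  congr 1
  ext i j
  simp [Xd, apply_ite (Polynomial.eval (0:ℝ))]

lemma coeff_one_prod {ι : Type*} [DecidableEq ι] (s : Finset ι) (a : ι → ℝ) :
    (∏ i ∈ s, ((X : ℝ[X]) + Polynomial.C (a i))).coeff 1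
      = ∑ j ∈ s, ∏ i ∈ s.erase j, a i := by
  induction s using Finset.induction_on with
  | empty => simp [Polynomial.coeff_one]
  | @insert j s hj ih =>
    have h0 : (∏ i ∈ s, ((X : ℝ[X]) + Polynomial.C (a i))).coeff 0 = ∏ i ∈ s, a i := by
      rw [Polynomial.coeff_zero_eq_eval_zero, Polynomial.eval_prod]
      simp
    rw [Finset.prod_insert hj, coeff1_mul, ih, h0, Finset.sum_insert hj, Finset.erase_insert hj]
    have hXC0 : ((X : ℝ[X]) + Polynomial.C (a j)).coeff 0 = a j := by simp
    have hXC1 : ((X : ℝ[X]) + Polynomial.C (a j)).coeff 1 = 1 := by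
      simp [Polynomial.coeff_C]
    rw [hXC0, hXC1, one_mul]
    have hre : ∀ j' ∈ s, ∏ i ∈ (insert j s).erase j', a i = a j * ∏ i ∈ s.erase j', a i := by
      intro j' hj'
      rw [Finset.erase_insert_of_ne (by rintro rfl; exact hj hj'), Finset.prod_insert
        (fun h => hj (Finset.mem_of_mem_erase h))]
    rw [Finset.sum_congr rfl hre, ← Finset.mul_sum]
    ring

lemma coeff_one_det (C : Matrix n n ℝ) :
    (Xd C).det.coeff 1 = ∑ j : n, (minorAt C j).det := by
  classical
  rw [Matrix.det_apply', Polynomial.finset_sum_coeff]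
  have hterm : ∀ σ : Equiv.Perm n,
      (((Equiv.Perm.sign σ : ℤ) : ℝ[X]) * ∏ i : n, Xd C (σ i) i).coeff 1
        = ∑ j ∈ Finset.univ.filter (fun i => σ i = i),
            (((Equiv.Perm.sign σ : ℤ) : ℝ) * ∏ i ∈ Finset.univ.erase j, C (σ i) i) := by
    intro σ
    set s : Finset n := Finset.univ.filter (fun i => σ i = i) with hs
    have hsplit : (∏ i : n, Xd C (σ i) i)
        = (∏ i ∈ s, ((X : ℝ[X]) + Polynomial.C (C i i)))
          * Polynomial.C (∏ i ∈ Finset.univ.filter (fun i => ¬ σ i = i), C (σ i) i) := by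
      rw [map_prod, ← Finset.prod_filter_mul_prod_filter_not Finset.univ (fun i => σ i = i)
        (fun i => Xd C (σ i) i)]
      congr 1
      · apply Finset.prod_congr rfl
        intro i hi
        rw [Finset.mem_filter] at hi
        rw [show Xd C (σ i) i
            = (if σ i = i then (X:ℝ[X]) else 0) + Polynomial.C (C (σ i) i) from rfl,
          if_pos hi.2, hi.2]
      · apply Finset.prod_congr rfl
        intro i hi
        rw [Finset.mem_filter] at hi
        rw [show Xd C (σ i) i
            = (if σ i = i then (X:ℝ[X]) else 0) + Polynomial.C (C (σ i) i) from rfl,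
          if_neg hi.2, zero_add]
    rw [← Polynomial.C_eq_intCast, Polynomial.coeff_C_mul, hsplit, Polynomial.coeff_mul_C,
      coeff_one_prod]
    have hcomb : ∀ j ∈ s, (∏ i ∈ s.erase j, C i i)
        * ∏ i ∈ Finset.univ.filter (fun i => ¬ σ i = i), C (σ i) i
        = ∏ i ∈ Finset.univ.erase j, C (σ i) i := by
      intro j hj
      have hjfix : σ j = j := (Finset.mem_filter.1 hj).2
      rw [← Finset.prod_filter_mul_prod_filter_not (Finset.univ.erase j) (fun i => σ i = i)
        (fun i => C (σ i) i)]
      congr 1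
      · rw [show (Finset.univ.erase j).filter (fun i => σ i = i) = s.erase j from by
          rw [Finset.filter_erase, hs]]
        apply Finset.prod_congr rfl
        intro i hi
        have : σ i = i := (Finset.mem_filter.1 (Finset.mem_of_mem_erase hi)).2
        rw [this]
      · apply Finset.prod_congr
        · rw [Finset.filter_erase]
          exact (Finset.erase_eq_of_notMem (by
            rw [Finset.mem_filter]
            rintro ⟨-, h⟩
            exact h hjfix)).symm
        · intro i _; rfl
    rw [Finset.sum_mul, Finset.mul_sum]
    apply Finset.sum_congr rfl
    intro j hj
    rw [hcomb j hj]
  rw [Finset.sum_congr rfl (fun σ _ => hterm σ)]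
  rw [Finset.sum_congr rfl (fun σ _ => Finset.sum_filter (fun i => σ i = i)
    (fun j => ((Equiv.Perm.sign σ : ℤ) : ℝ) * ∏ i ∈ Finset.univ.erase j, C (σ i) i))]
  rw [Finset.sum_comm]
  apply Finset.sum_congr rfl
  intro j _
  rw [← Finset.sum_filter, Matrix.det_apply']
  have hfixmap : ∀ σ : Equiv.Perm n, σ j = j → ∀ x : n, x ≠ j ↔ σ x ≠ j := by
    intro σ hσ x
    constructor
    · intro hx h; exact hx (σ.injective (h.trans hσ.symm))
    · intro hx h; exact hx (by rw [h, hσ])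
  apply Finset.sum_bij (i := fun σ hσ =>
    Equiv.Perm.subtypePerm σ (fun x => (hfixmap σ (Finset.mem_filter.1 hσ).2 x).symm))
  · intro σ hσ; exact Finset.mem_univ _
  · intro σ₁ hσ₁ σ₂ hσ₂ heq
    have h1 : σ₁ j = j := (Finset.mem_filter.1 hσ₁).2
    have h2 : σ₂ j = j := (Finset.mem_filter.1 hσ₂).2
    ext x
    by_cases hx : x = j
    · subst hx; rw [h1, h2]
    · have := congrArg (fun e => ((e : Equiv.Perm {i : n // i ≠ j}) ⟨x, hx⟩ : {i : n // i ≠ j}))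
        heq
      simpa [Equiv.Perm.subtypePerm, Subtype.ext_iff] using this
  · intro τ _
    have hjfix : Equiv.Perm.ofSubtype τ j = j :=
      Equiv.Perm.ofSubtype_apply_of_not_mem τ (by simp)
    refine ⟨Equiv.Perm.ofSubtype τ, Finset.mem_filter.2 ⟨Finset.mem_univ _, hjfix⟩, ?_⟩
    exact Equiv.Perm.subtypePerm_ofSubtype τ
  · intro σ hσ
    have hjfix : σ j = j := (Finset.mem_filter.1 hσ).2
    have hsgn : Equiv.Perm.sign σ
        = Equiv.Perm.sign (Equiv.Perm.subtypePerm (p := fun i => i ≠ j) σ (fun x => (hfixmap σ hjfix x).symm)) := by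
      conv_lhs => rw [show σ = Equiv.Perm.ofSubtype (Equiv.Perm.subtypePerm (p := fun i => i ≠ j) σ (fun x => (hfixmap σ hjfix x).symm))
        from (Equiv.Perm.ofSubtype_subtypePerm _ (fun x hx => by
          intro hxj
          exact hx (by rw [hxj, hjfix]))).symm]
      rw [Equiv.Perm.sign_ofSubtype]
    have hprod : ∏ i ∈ Finset.univ.erase j, C (σ i) i
        = ∏ u : {i : n // i ≠ j}, C (σ (u : n)) (u : n) := by
      rw [Finset.prod_subtype (p := fun i => i ≠ j) (Finset.univ.erase j) (fun x => by simp) (fun i => C (σ i) i)]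
    rw [hsgn, hprod]
    rfl

end Coeff

section Block
open Polynomial

variable {V : Type*} [Fintype V] [DecidableEq V]

lemma Xd_apply {n : Type*} [DecidableEq n] (C : Matrix n n ℝ) (i j : n) :
    Xd C i j = (if i = j then (X : ℝ[X]) else 0) + Polynomial.C (C i j) := rfl


lemma mem_midArcs_ll (arcs : Finset (V × V)) (u v : V) :
    ((Sum.inl u, Sum.inl v) : (V ⊕ {a : V × V // a ∈ arcs}) × (V ⊕ {a : V × V // a ∈ arcs}))
      ∈ midArcs arcs ↔ False := by
  simp [midArcs]


lemma mem_midArcs_lr (arcs : Finset (V × V)) (u : V) (e : {a : V × V // a ∈ arcs}) :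
    ((Sum.inl u, Sum.inr e) : (V ⊕ {a : V × V // a ∈ arcs}) × (V ⊕ {a : V × V // a ∈ arcs}))
      ∈ midArcs arcs ↔ (e : V × V).1 = u := by
  simp [midArcs]


lemma mem_midArcs_rl (arcs : Finset (V × V)) (e : {a : V × V // a ∈ arcs}) (v : V) :
    ((Sum.inr e, Sum.inl v) : (V ⊕ {a : V × V // a ∈ arcs}) × (V ⊕ {a : V × V // a ∈ arcs}))
      ∈ midArcs arcs ↔ (e : V × V).2 = v := by
  simp [midArcs]


lemma mem_midArcs_rr (arcs : Finset (V × V)) (e f : {a : V × V // a ∈ arcs}) :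
    ((Sum.inr e, Sum.inr f) : (V ⊕ {a : V × V // a ∈ arcs}) × (V ⊕ {a : V × V // a ∈ arcs}))
      ∈ midArcs arcs ↔ (e : V × V).2 = (f : V × V).1 := by
  simp [midArcs]

lemma sum_subtype_arcs {M : Type*} [AddCommMonoid M] (arcs : Finset (V × V)) (g : V × V → M) :
    ∑ e : {a : V × V // a ∈ arcs}, g (e : V × V) = ∑ a ∈ arcs, g a :=
  Finset.sum_coe_sort arcs g

lemma prod_subtype_arcs {M : Type*} [CommMonoid M] (arcs : Finset (V × V)) (g : V × V → M) :
    ∏ e : {a : V × V // a ∈ arcs}, g (e : V × V) = ∏ a ∈ arcs, g a :=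
  Finset.prod_coe_sort arcs g

lemma sum_adjW (arcs : Finset (V × V)) (χ : V × V → ℝ) (u₀ : V) :
    ∑ k : V, adjW arcs χ u₀ k = wOut arcs χ u₀ := by
  have h1 : ∀ k : V, adjW arcs χ u₀ k = ∑ a ∈ arcs, if a = (u₀, k) then χ a else 0 := by
    intro k
    rw [Finset.sum_ite_eq' arcs (u₀, k) χ]
    rfl
  simp_rw [h1]
  rw [Finset.sum_comm]
  unfold wOut
  rw [Finset.sum_filter]
  apply Finset.sum_congr rfl
  intro a _
  by_cases h : a.1 = u₀
  · rw [if_pos h]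
    have hiff : ∀ k : V, (a = (u₀, k)) ↔ (k = a.2) := by
      intro k
      constructor
      · rintro rfl; rfl
      · rintro rfl
        rw [Prod.ext_iff]
        exact ⟨h, rfl⟩
    calc ∑ k : V, (if a = (u₀, k) then χ a else 0)
        = ∑ k : V, (if k = a.2 then χ a else 0) :=
          Finset.sum_congr rfl (fun k _ => if_congr (hiff k) rfl rfl)
      _ = χ a := by
          rw [Finset.sum_ite_eq' Finset.univ a.2 (fun _ => χ a), if_pos (Finset.mem_univ _)]
  · rw [if_neg h]
    apply Finset.sum_eq_zero
    intro k _
    rw [if_neg]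
    rintro rfl
    exact h rfl

/-- The key determinant factorization for the middle digraph. -/
theorem det_Xd_mid (arcs : Finset (V × V)) (χv : V → ℝ) (χ : V × V → ℝ)
    (hsimple : ∀ v : V, (v, v) ∉ arcs) :
    (Xd (lapEdge (midArcs arcs) (fun p => midWeight arcs χv χ p.2))).det
      = (Xd (lapEdge arcs χ)).det
        * ∏ i : V, ((X : ℝ[X]) + Polynomial.C (χv i + wOut arcs χ i)) ^ (indeg arcs i) := by
  classical
  set ω : ((V ⊕ {a : V × V // a ∈ arcs}) × (V ⊕ {a : V × V // a ∈ arcs})) → ℝ := fun p => midWeight arcs χv χ p.2 with hω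
  have hωr : ∀ (x : V ⊕ {a : V × V // a ∈ arcs}) (v : V), ω (x, Sum.inl v) = χv v := fun _ _ => rfl
  have hωe : ∀ (x : V ⊕ {a : V × V // a ∈ arcs}) (e : {a : V × V // a ∈ arcs}), ω (x, Sum.inr e) = χ (e : V × V) := fun _ _ => rfl
  set Pm : Matrix V {a : V × V // a ∈ arcs} ℝ[X] :=
    Matrix.of (fun u (e : {a : V × V // a ∈ arcs}) => if (e : V × V).1 = u then Polynomial.C (χ (e : V × V)) else 0)
    with hPm
  set Qm : Matrix {a : V × V // a ∈ arcs} V ℝ[X] :=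
    Matrix.of (fun (e : {a : V × V // a ∈ arcs}) v => if (e : V × V).2 = v then (1 : ℝ[X]) else 0) with hQm
  set dD : V → ℝ[X] := fun v => (X : ℝ[X]) + Polynomial.C (wOut arcs χ v) with hdD
  set dE : {a : V × V // a ∈ arcs} → ℝ[X] := fun e =>
    (X : ℝ[X]) + Polynomial.C (χv (e : V × V).2 + wOut arcs χ (e : V × V).2) with hdE
  set XVm : Matrix V V ℝ[X] := Matrix.diagonal (fun v => Polynomial.C (χv v)) with hXVm
  have hloopA : ∀ e : {a : V × V // a ∈ arcs}, (e : V × V).2 ≠ (e : V × V).1 := by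
    rintro ⟨⟨a, b⟩, he⟩ h
    dsimp at h
    subst h
    exact hsimple _ he
  -- weighted out-degree sums for the middle digraph
  have hdV : ∀ u : V, ∑ k ∈ Finset.univ.erase (Sum.inl u : V ⊕ {a : V × V // a ∈ arcs}),
      adjW (midArcs arcs) ω (Sum.inl u) k = wOut arcs χ u := by
    intro u
    rw [Finset.sum_erase Finset.univ
      (show adjW (midArcs arcs) ω (Sum.inl u) (Sum.inl u) = 0 from
        if_neg (fun h => (mem_midArcs_ll arcs u u).1 h))]
    rw [Fintype.sum_sum_type]
    have hz : ∑ v : V, adjW (midArcs arcs) ω (Sum.inl u) (Sum.inl v) = 0 :=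
      Finset.sum_eq_zero (fun v _ => if_neg (fun h => (mem_midArcs_ll arcs u v).1 h))
    rw [hz, zero_add]
    have : ∀ e : {a : V × V // a ∈ arcs}, adjW (midArcs arcs) ω (Sum.inl u) (Sum.inr e)
        = (if (e : V × V).1 = u then χ (e : V × V) else 0) := by
      intro e
      simp only [adjW, mem_midArcs_lr]
      by_cases h : (e : V × V).1 = u <;> simp [h, hωe]
    rw [Finset.sum_congr rfl (fun e _ => this e)]
    rw [sum_subtype_arcs arcs (fun a => if a.1 = u then χ a else 0)]
    unfold wOut
    rw [Finset.sum_filter]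
  have hdA : ∀ e : {a : V × V // a ∈ arcs}, ∑ k ∈ Finset.univ.erase (Sum.inr e : V ⊕ {a : V × V // a ∈ arcs}),
      adjW (midArcs arcs) ω (Sum.inr e) k
        = χv (e : V × V).2 + wOut arcs χ (e : V × V).2 := by
    intro e
    rw [Finset.sum_erase Finset.univ
      (show adjW (midArcs arcs) ω (Sum.inr e) (Sum.inr e) = 0 from
        if_neg (fun h => hloopA e ((mem_midArcs_rr arcs e e).1 h)))]
    rw [Fintype.sum_sum_type]
    have h1 : ∑ v : V, adjW (midArcs arcs) ω (Sum.inr e) (Sum.inl v) = χv (e : V × V).2 := by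
      have : ∀ v : V, adjW (midArcs arcs) ω (Sum.inr e) (Sum.inl v)
          = (if (e : V × V).2 = v then χv v else 0) := by
        intro v
        simp only [adjW, mem_midArcs_rl]
        by_cases h : (e : V × V).2 = v <;> simp [h, hωr]
      rw [Finset.sum_congr rfl (fun v _ => this v), Finset.sum_ite_eq Finset.univ
        (e : V × V).2 χv, if_pos (Finset.mem_univ _)]
    have h2 : ∑ f : {a : V × V // a ∈ arcs}, adjW (midArcs arcs) ω (Sum.inr e) (Sum.inr f)
        = wOut arcs χ (e : V × V).2 := by
      have : ∀ f : {a : V × V // a ∈ arcs}, adjW (midArcs arcs) ω (Sum.inr e) (Sum.inr f)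
          = (if (f : V × V).1 = (e : V × V).2 then χ (f : V × V) else 0) := by
        intro f
        simp only [adjW, mem_midArcs_rr]
        by_cases h : (e : V × V).2 = (f : V × V).1
        · rw [if_pos h, if_pos h.symm, hωe]
        · rw [if_neg h, if_neg (fun h' => h h'.symm)]
      rw [Finset.sum_congr rfl (fun f _ => this f),
        sum_subtype_arcs arcs (fun a => if a.1 = (e : V × V).2 then χ a else 0)]
      unfold wOut
      rw [Finset.sum_filter]
    rw [h1, h2]
  -- the product Pm * Qm is the (C-mapped) weighted adjacency matrix
  have hPQ : ∀ u v : V, (Pm * Qm) u v = Polynomial.C (adjW arcs χ u v) := by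
    intro u v
    rw [Matrix.mul_apply]
    have : ∀ e : {a : V × V // a ∈ arcs}, Pm u e * Qm e v
        = (if (e : V × V) = (u, v) then Polynomial.C (χ (e : V × V)) else 0) := by
      intro e
      simp only [hPm, hQm, Matrix.of_apply]
      by_cases h1 : (e : V × V).1 = u <;> by_cases h2 : (e : V × V).2 = v
      · rw [if_pos h1, if_pos h2, mul_one, if_pos (by rw [Prod.ext_iff]; exact ⟨h1, h2⟩)]
      · rw [if_pos h1, if_neg h2, mul_zero, if_neg (by rw [Prod.ext_iff]; rintro ⟨-, h⟩; exact h2 h)]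
      · rw [if_neg h1, zero_mul, if_neg (by rw [Prod.ext_iff]; rintro ⟨h, -⟩; exact h1 h)]
      · rw [if_neg h1, zero_mul, if_neg (by rw [Prod.ext_iff]; rintro ⟨h, -⟩; exact h1 h)]
    rw [Finset.sum_congr rfl (fun e _ => this e),
      sum_subtype_arcs arcs (fun a => if a = (u, v) then Polynomial.C (χ a) else 0),
      Finset.sum_ite_eq' arcs (u, v) (fun a => Polynomial.C (χ a))]
    unfold adjW
    by_cases h : (u, v) ∈ arcs <;> simp [h]
  have hadj_diag : ∀ u : V, adjW arcs χ u u = 0 := by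
    intro u
    unfold adjW
    rw [if_neg (hsimple u)]
  -- identification of `Xd lapD`
  have hLD : Xd (lapEdge arcs χ) = Matrix.diagonal dD - Pm * Qm := by
    ext u v : 1
    rw [Xd_apply, Matrix.sub_apply, hPQ]
    by_cases h : u = v
    · subst h
      rw [if_pos rfl, Matrix.diagonal_apply_eq, hdD]
      have : lapEdge arcs χ u u = wOut arcs χ u := by
        simp only [lapEdge, if_pos rfl]
        rw [Finset.sum_erase Finset.univ (by
          rw [hadj_diag u])]
        exact sum_adjW arcs χ u
      rw [this, hadj_diag u]
      simp
    · rw [if_neg h, Matrix.diagonal_apply_ne _ h]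
      have : lapEdge arcs χ u v = - adjW arcs χ u v := by
        simp only [lapEdge, if_neg h]
      rw [this]
      simp
  -- block identification of the middle Laplacian
  have h1 : Xd (lapEdge (midArcs arcs) ω)
      = Matrix.fromBlocks (Matrix.diagonal dD) (-Pm) (-(Qm * XVm))
          (Matrix.diagonal dE - Qm * Pm) := by
    ext i j : 1
    rcases i with u | e <;> rcases j with v | f
    · simp only [Matrix.fromBlocks_apply₁₁, Xd_apply]
      by_cases h : u = v
      · subst h
        rw [if_pos rfl, Matrix.diagonal_apply_eq, hdD]
        have : lapEdge (midArcs arcs) ω (Sum.inl u) (Sum.inl u)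
            = wOut arcs χ u := by
          simp only [lapEdge, if_pos rfl]
          exact hdV u
        rw [this]
      · rw [if_neg (by simpa using h), Matrix.diagonal_apply_ne _ h]
        have : lapEdge (midArcs arcs) ω (Sum.inl u) (Sum.inl v)
            = - adjW (midArcs arcs) ω (Sum.inl u) (Sum.inl v) := by
          simp only [lapEdge, if_neg (show (Sum.inl u : V ⊕ {a : V × V // a ∈ arcs}) ≠ Sum.inl v by simpa using h)]
        rw [this, show adjW (midArcs arcs) ω (Sum.inl u) (Sum.inl v) = 0 from
          if_neg (fun hh => (mem_midArcs_ll arcs u v).1 hh)]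
        simp
    · simp only [Matrix.fromBlocks_apply₁₂, Xd_apply, Matrix.neg_apply, hPm, Matrix.of_apply]
      rw [if_neg (by simp)]
      have : lapEdge (midArcs arcs) ω (Sum.inl u) (Sum.inr f)
          = - adjW (midArcs arcs) ω (Sum.inl u) (Sum.inr f) := by
        simp only [lapEdge, if_neg (show (Sum.inl u : V ⊕ {a : V × V // a ∈ arcs}) ≠ Sum.inr f by simp)]
      rw [this]
      simp only [adjW, mem_midArcs_lr]
      by_cases h : (f : V × V).1 = u <;> simp [h, hωe]
    · simp only [Matrix.fromBlocks_apply₂₁, Xd_apply, Matrix.neg_apply]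
      rw [if_neg (by simp)]
      have : lapEdge (midArcs arcs) ω (Sum.inr e) (Sum.inl v)
          = - adjW (midArcs arcs) ω (Sum.inr e) (Sum.inl v) := by
        simp only [lapEdge, if_neg (show (Sum.inr e : V ⊕ {a : V × V // a ∈ arcs}) ≠ Sum.inl v by simp)]
      rw [this]
      have hq : (Qm * XVm) e v = (if (e : V × V).2 = v then Polynomial.C (χv v) else 0) := by
        rw [hXVm, Matrix.mul_diagonal, hQm]
        by_cases h : (e : V × V).2 = v <;> simp [h]
      rw [hq]
      simp only [adjW, mem_midArcs_rl]
      by_cases h : (e : V × V).2 = v <;> simp [h, hωr]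
    · simp only [Matrix.fromBlocks_apply₂₂, Xd_apply, Matrix.sub_apply]
      have hqp : (Qm * Pm) e f
          = (if (f : V × V).1 = (e : V × V).2 then Polynomial.C (χ (f : V × V)) else 0) := by
        rw [Matrix.mul_apply]
        have : ∀ w : V, Qm e w * Pm w f
            = (if (e : V × V).2 = w then (if (f : V × V).1 = w then Polynomial.C (χ (f : V × V))
                else 0) else 0) := by
          intro w
          simp only [hQm, hPm, Matrix.of_apply]
          by_cases h : (e : V × V).2 = w <;> simp [h]
        rw [Finset.sum_congr rfl (fun w _ => this w), Finset.sum_ite_eq Finset.univ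
          (e : V × V).2 _, if_pos (Finset.mem_univ _)]
      rw [hqp]
      by_cases h : e = f
      · subst h
        rw [if_pos rfl, Matrix.diagonal_apply_eq, hdE, if_neg (hloopA e ∘ Eq.symm)]
        have : lapEdge (midArcs arcs) ω (Sum.inr e) (Sum.inr e)
            = χv (e : V × V).2 + wOut arcs χ (e : V × V).2 := by
          simp only [lapEdge, if_pos rfl]
          exact hdA e
        rw [this]
        ring
      · rw [if_neg (by simpa using h), Matrix.diagonal_apply_ne _ h]
        have : lapEdge (midArcs arcs) ω (Sum.inr e) (Sum.inr f)
            = - adjW (midArcs arcs) ω (Sum.inr e) (Sum.inr f) := by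
          simp only [lapEdge, if_neg (show (Sum.inr e : V ⊕ {a : V × V // a ∈ arcs}) ≠ Sum.inr f by simpa using h)]
        rw [this]
        simp only [adjW, mem_midArcs_rr]
        by_cases h2 : (e : V × V).2 = (f : V × V).1
        · rw [if_pos h2, if_pos h2.symm, hωe]
          simp
        · rw [if_neg h2, if_neg (fun h' => h2 h'.symm)]
          simp
  -- the exchange identity
  have hEQ : Matrix.diagonal dE * Qm = Qm * XVm + Qm * Matrix.diagonal dD := by
    ext e v : 1
    rw [Matrix.add_apply, Matrix.diagonal_mul, hXVm, Matrix.mul_diagonal, Matrix.mul_diagonal]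
    by_cases h : (e : V × V).2 = v
    · simp only [hQm, Matrix.of_apply, if_pos h, one_mul, mul_one]
      show (X : ℝ[X]) + Polynomial.C (χv (e : V × V).2 + wOut arcs χ (e : V × V).2)
          = Polynomial.C (χv v) + ((X : ℝ[X]) + Polynomial.C (wOut arcs χ v))
      rw [h, map_add]
      ring
    · simp only [hQm, Matrix.of_apply, if_neg h, zero_mul, mul_zero, add_zero]
  -- determinant computation
  have hprod : (Matrix.fromBlocks (1 : Matrix V V ℝ[X]) 0 (-Qm) 1)
      * (Xd (lapEdge (midArcs arcs) ω) * Matrix.fromBlocks 1 0 Qm 1)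
      = Matrix.fromBlocks (Xd (lapEdge arcs χ)) (-Pm) 0 (Matrix.diagonal dE) := by
    rw [h1, Matrix.fromBlocks_multiply, Matrix.fromBlocks_multiply, Matrix.fromBlocks_inj]
    refine ⟨?_, ?_, ?_, ?_⟩
    · rw [hLD]
      simp only [Matrix.mul_one, Matrix.mul_zero, zero_add, add_zero, Matrix.one_mul,
        Matrix.zero_mul, Matrix.neg_mul, sub_eq_add_neg]
    · simp only [Matrix.mul_one, Matrix.mul_zero, zero_add, add_zero, Matrix.one_mul,
        Matrix.zero_mul]
    · have hexp : (Matrix.diagonal dE - Qm * Pm) * Qm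
          = Qm * XVm + Qm * Matrix.diagonal dD - Qm * Pm * Qm := by
        rw [Matrix.sub_mul, hEQ]
      rw [hexp]
      simp only [Matrix.mul_one, Matrix.mul_zero, zero_add, add_zero, Matrix.one_mul,
        Matrix.zero_mul, Matrix.mul_add, Matrix.mul_neg, Matrix.neg_mul, Matrix.mul_assoc,
        Matrix.mul_sub, sub_eq_add_neg]
      abel
    · simp only [Matrix.mul_one, Matrix.mul_zero, zero_add, add_zero, Matrix.one_mul,
        Matrix.zero_mul, Matrix.neg_mul, Matrix.mul_neg, neg_neg, sub_eq_add_neg]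
      abel
  have hF1 : (Matrix.fromBlocks (1 : Matrix V V ℝ[X]) 0 Qm 1).det = 1 := by
    rw [Matrix.det_fromBlocks_zero₁₂]
    simp
  have hF2 : (Matrix.fromBlocks (1 : Matrix V V ℝ[X]) 0 (-Qm) 1).det = 1 := by
    rw [Matrix.det_fromBlocks_zero₁₂]
    simp
  have hdet1 : (Xd (lapEdge (midArcs arcs) ω)).det
      = (Xd (lapEdge arcs χ)).det * (Matrix.diagonal dE).det := by
    calc (Xd (lapEdge (midArcs arcs) ω)).det
        = (Matrix.fromBlocks (1 : Matrix V V ℝ[X]) 0 (-Qm) 1).det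
          * ((Xd (lapEdge (midArcs arcs) ω)).det
            * (Matrix.fromBlocks (1 : Matrix V V ℝ[X]) 0 Qm 1).det) := by
          rw [hF1, hF2]; ring
      _ = ((Matrix.fromBlocks (1 : Matrix V V ℝ[X]) 0 (-Qm) 1)
            * (Xd (lapEdge (midArcs arcs) ω) * Matrix.fromBlocks 1 0 Qm 1)).det := by
          rw [Matrix.det_mul, Matrix.det_mul]
      _ = (Matrix.fromBlocks (Xd (lapEdge arcs χ)) (-Pm) 0 (Matrix.diagonal dE)).det := by
          rw [hprod]
      _ = (Xd (lapEdge arcs χ)).det * (Matrix.diagonal dE).det :=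
          Matrix.det_fromBlocks_zero₂₁ _ _ _
  rw [hdet1, Matrix.det_diagonal]
  congr 1
  -- regroup the product by heads
  rw [show ∏ e : {a : V × V // a ∈ arcs}, dE e
      = ∏ a ∈ arcs, ((X : ℝ[X]) + Polynomial.C (χv a.2 + wOut arcs χ a.2)) from
    prod_subtype_arcs arcs (fun a => (X : ℝ[X]) + Polynomial.C (χv a.2 + wOut arcs χ a.2))]
  rw [← Finset.prod_fiberwise_of_maps_to (g := fun a : V × V => a.2) (t := Finset.univ)
    (fun a _ => Finset.mem_univ _)
    (fun a => (X : ℝ[X]) + Polynomial.C (χv a.2 + wOut arcs χ a.2))]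
  apply Finset.prod_congr rfl
  intro i _
  have hcst : ∀ a ∈ arcs.filter (fun a => a.2 = i),
      (X : ℝ[X]) + Polynomial.C (χv a.2 + wOut arcs χ a.2)
        = (X : ℝ[X]) + Polynomial.C (χv i + wOut arcs χ i) := by
    intro a ha
    rw [(Finset.mem_filter.1 ha).2]
  rw [Finset.prod_congr rfl hcst, Finset.prod_const]
  rfl

end Block

open Polynomial in
/-- **Main theorem.** `κ^{vertex}(M(D), χ) = κ^{edge}(D, χ) · Π_i (χ_i + d_i)^{r_i}`. -/
theorem kappaVertex_middle {V : Type*} [Fintype V] [DecidableEq V]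
    (arcs : Finset (V × V)) (χv : V → ℝ) (χ : V × V → ℝ)
    (hsimple : ∀ v : V, (v, v) ∉ arcs)
    (hposv : ∀ v : V, 0 < χv v) (hpose : ∀ a ∈ arcs, 0 < χ a) :
    kappaVertex (midArcs arcs) (midWeight arcs χv χ) =
      kappaEdge arcs χ * ∏ i : V, (χv i + wOut arcs χ i) ^ (indeg arcs i) := by
  classical
  rcases isEmpty_or_nonempty V with hV | hV
  · haveI hA : IsEmpty {a : V × V // a ∈ arcs} := ⟨fun e => hV.false e.1.1⟩
    have h1 : kappaVertex (midArcs arcs) (midWeight arcs χv χ) = 0 := by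
      unfold kappaVertex
      rw [Finset.univ_eq_empty, Finset.sum_empty]
    have h2 : kappaEdge arcs χ = 0 := by
      unfold kappaEdge
      rw [Finset.univ_eq_empty, Finset.sum_empty]
    rw [h1, h2, zero_mul]
  · have hloopD : ∀ a ∈ arcs, a.1 ≠ a.2 := by
      intro a ha h
      apply hsimple a.1
      have he : a = (a.1, a.1) := by
        rw [Prod.ext_iff]
        exact ⟨rfl, h.symm⟩
      rwa [he] at ha
    have hloopM : ∀ p ∈ midArcs arcs, p.1 ≠ p.2 := by
      rintro ⟨x | e, y | f⟩ hmem h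
      · exact (mem_midArcs_ll arcs x y).1 hmem
      · exact absurd h (by simp)
      · exact absurd h (by simp)
      · have hef : e = f := by simpa using h
        subst hef
        have h2 : (e : V × V).2 = (e : V × V).1 := (mem_midArcs_rr arcs e e).1 hmem
        apply hsimple (e : V × V).1
        have he : ((e : V × V).1, (e : V × V).1) = (e : V × V) := by
          rw [Prod.ext_iff]
          exact ⟨rfl, h2.symm⟩
        rw [he]
        exact e.2
    have hKV : kappaVertex (midArcs arcs) (midWeight arcs χv χ)
        = ∑ ρ : V ⊕ {a : V × V // a ∈ arcs},
            (minorAt (lapEdge (midArcs arcs)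
              (fun p => midWeight arcs χv χ p.2)) ρ).det := by
      unfold kappaVertex
      apply Finset.sum_congr rfl
      intro ρ _
      exact (det_minor_lapEdge (midArcs arcs)
        (fun p => midWeight arcs χv χ p.2) hloopM ρ).symm
    rw [hKV, ← coeff_one_det (lapEdge (midArcs arcs) (fun p => midWeight arcs χv χ p.2)),
      det_Xd_mid arcs χv χ hsimple, coeff1_mul]
    have hq0 : (∏ i : V,
        ((X : ℝ[X]) + Polynomial.C (χv i + wOut arcs χ i)) ^ (indeg arcs i)).coeff 0
        = ∏ i : V, (χv i + wOut arcs χ i) ^ (indeg arcs i) := by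
      rw [Polynomial.coeff_zero_eq_eval_zero, Polynomial.eval_prod]
      simp
    have hdet0 : (lapEdge arcs χ).det = 0 := by
      apply Matrix.exists_mulVec_eq_zero_iff.1
      refine ⟨fun _ => 1, ?_, ?_⟩
      · intro hcon
        have := congrFun hcon (Classical.arbitrary V)
        simp at this
      · funext u
        have hmv : (lapEdge arcs χ).mulVec (fun _ => 1) u = ∑ v : V, lapEdge arcs χ u v := by
          simp [Matrix.mulVec, dotProduct]
        rw [hmv, ← Finset.add_sum_erase Finset.univ (fun v => lapEdge arcs χ u v)
          (Finset.mem_univ u)]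
        have h1 : lapEdge arcs χ u u = ∑ k ∈ Finset.univ.erase u, adjW arcs χ u k := by
          simp [lapEdge]
        have h2 : ∑ v ∈ Finset.univ.erase u, lapEdge arcs χ u v
            = ∑ v ∈ Finset.univ.erase u, - adjW arcs χ u v := by
          apply Finset.sum_congr rfl
          intro v hv
          have huv : u ≠ v := fun h => (Finset.mem_erase.1 hv).1 h.symm
          simp [lapEdge, huv]
        rw [h1, h2, Finset.sum_neg_distrib]
        simp
    have hp0 : (Xd (lapEdge arcs χ)).det.coeff 0 = 0 := by rw [coeff_zero_det, hdet0]
    rw [hp0, hq0, coeff_one_det (lapEdge arcs χ), zero_mul, zero_add]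
    congr 1
    unfold kappaEdge
    exact Finset.sum_congr rfl (fun r _ => det_minor_lapEdge arcs χ hloopD r)
end
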